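/- arXiv:1810.10365 — 7 statements merged into one kernel-verified Lean document; each statement's English description precedes it below -/
import Mathlib

section
/- Let k and ℓ be nonnegative integers with p := k + ℓ − 1 ≥ 1. If (U, V) solves the self-similar system (S) on the interval (−1,1) and both U and V are bounded on (−1,1), then U and V are identically zero on (−1,1). -/
open Set Complex Filter Topology

/-- `R(y) = U(y) conj(V(y)) + conj(U(y)) V(y)` (a real number, viewed in `ℂ`). -/
noncomputable def Rfun (U V : ℝ → ℂ) (y : ℝ) : ℂ :=
  U y * (starRingEnd ℂ) (V y) + (starRingEnd ℂ) (U y) * V y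

/-- `F(y) = ℓ (|U|² + |V|²)^k R^{ℓ-1}` (equal to `0` when `ℓ = 0`). -/
noncomputable def Ffun (k l : ℕ) (U V : ℝ → ℂ) (y : ℝ) : ℂ :=
  (l : ℂ) * ((‖U y‖ ^ 2 + ‖V y‖ ^ 2 : ℝ) : ℂ) ^ k *
    (Rfun U V y) ^ (l - 1)

/-- `G(y) = k (|U|² + |V|²)^{k-1} R^ℓ` (equal to `0` when `k = 0`). -/
noncomputable def Gfun (k l : ℕ) (U V : ℝ → ℂ) (y : ℝ) : ℂ :=
  (k : ℂ) * ((‖U y‖ ^ 2 + ‖V y‖ ^ 2 : ℝ) : ℂ) ^ (k - 1) *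
    (Rfun U V y) ^ l

/-- `(U, V)` solves the self-similar system (S) on the open set `J`:
`U, V` are continuously differentiable on `J` and for all `y ∈ J`,
`i[(y+1)U' + U/(2p)] = F V + G U` and `i[(y-1)V' + V/(2p)] = F U + G V`,
where `p = k + ℓ - 1`. -/
def SolvesS (k l : ℕ) (U V : ℝ → ℂ) (J : Set ℝ) : Prop :=
  ContDiffOn ℝ 1 U J ∧ ContDiffOn ℝ 1 V J ∧
  ∀ y ∈ J,
    Complex.I * ((↑y + 1) * deriv U y + (1 / (2 * ((k + l - 1 : ℕ) : ℂ))) * U y)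
      = Ffun k l U V y * V y + Gfun k l U V y * U y ∧
    Complex.I * ((↑y - 1) * deriv V y + (1 / (2 * ((k + l - 1 : ℕ) : ℂ))) * V y)
      = Ffun k l U V y * U y + Gfun k l U V y * V y

set_option maxHeartbeats 1000000

/-- Monotone-to-limit lemma, left endpoint version. -/
lemma aux_L1 (f f' : ℝ → ℝ) (x0 : ℝ) (hx0 : x0 ∈ Ioo (-1:ℝ) 1)
    (hd : ∀ y ∈ Ioo (-1:ℝ) 1, HasDerivAt f (f' y) y)
    (hd' : ∀ y ∈ Ioo (-1:ℝ) 1, f' y ≤ 0)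
    (hnn : 0 ≤ f x0)
    (hlim : Tendsto f (𝓝[>] (-1:ℝ)) (𝓝 0)) : f x0 = 0 := by
  have hsub : Ioc (-1:ℝ) x0 ⊆ Ioo (-1:ℝ) 1 := fun y hy => ⟨hy.1, lt_of_le_of_lt hy.2 hx0.2⟩
  have hint : interior (Ioc (-1:ℝ) x0) = Ioo (-1) x0 := interior_Ioc
  have hanti : AntitoneOn f (Ioc (-1:ℝ) x0) := by
    apply antitoneOn_of_deriv_nonpos (convex_Ioc _ _)
    · exact fun y hy => ((hd y (hsub hy)).continuousAt).continuousWithinAt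
    · intro y hy
      rw [hint] at hy
      exact ((hd y (hsub ⟨hy.1, hy.2.le⟩)).differentiableAt).differentiableWithinAt
    · intro y hy
      rw [hint] at hy
      have hy' : y ∈ Ioo (-1:ℝ) 1 := hsub ⟨hy.1, hy.2.le⟩
      rw [(hd y hy').deriv]
      exact hd' y hy'
  have hev : ∀ᶠ y in 𝓝[>] (-1:ℝ), f x0 ≤ f y := by
    filter_upwards [Ioo_mem_nhdsGT_of_mem (by constructor <;> [rfl; exact hx0.1] : (-1:ℝ) ∈ Ico (-1:ℝ) x0)] with y hy
    exact hanti ⟨hy.1, hy.2.le⟩ ⟨hx0.1, le_rfl⟩ hy.2.le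
  exact le_antisymm (ge_of_tendsto hlim hev) hnn

/-- Monotone-to-limit lemma, right endpoint version: f nondecreasing on [y₀,1),
nonneg at y₀, tends to 0 at 1⁻, hence f y₀ = 0. -/
lemma aux_L2 (f f' : ℝ → ℝ) (y₀ : ℝ) (hy₀ : y₀ ∈ Ioo (-1:ℝ) 1)
    (hd : ∀ y ∈ Ico y₀ (1:ℝ), HasDerivAt f (f' y) y)
    (hd' : ∀ y ∈ Ioo y₀ (1:ℝ), 0 ≤ f' y)
    (hnn : 0 ≤ f y₀)
    (hlim : Tendsto f (𝓝[<] (1:ℝ)) (𝓝 0)) : f y₀ = 0 := by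
  have hint : interior (Ico y₀ (1:ℝ)) = Ioo y₀ 1 := interior_Ico
  have hmono : MonotoneOn f (Ico y₀ (1:ℝ)) := by
    apply monotoneOn_of_deriv_nonneg (convex_Ico _ _)
    · exact fun y hy => ((hd y hy).continuousAt).continuousWithinAt
    · intro y hy
      rw [hint] at hy
      exact ((hd y ⟨hy.1.le, hy.2⟩).differentiableAt).differentiableWithinAt
    · intro y hy
      rw [hint] at hy
      rw [(hd y ⟨hy.1.le, hy.2⟩).deriv]
      exact hd' y hy
  have hev : ∀ᶠ y in 𝓝[<] (1:ℝ), f y₀ ≤ f y := by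
    filter_upwards [Ioo_mem_nhdsLT_of_mem (by constructor <;> [exact hy₀.2; rfl] : (1:ℝ) ∈ Ioc y₀ 1)] with y hy
    exact hmono ⟨le_rfl, hy₀.2⟩ ⟨hy.1.le, hy.2⟩ hy.1.le
  exact le_antisymm (ge_of_tendsto hlim hev) hnn

/-- Gronwall-type: |f'| ≤ K |f| on [y₀,y₁], f(y₀)=0 ⇒ f(y₁)=0. -/
lemma aux_gron (f f' : ℝ → ℝ) (K y₀ y₁ : ℝ) (h01 : y₀ ≤ y₁)
    (hd : ∀ y ∈ Icc y₀ y₁, HasDerivAt f (f' y) y)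
    (hb : ∀ y ∈ Icc y₀ y₁, |f' y| ≤ K * |f y|)
    (h0 : f y₀ = 0) : f y₁ = 0 := by
  have := norm_le_gronwallBound_of_norm_deriv_right_le (f := f) (f' := f') (δ := 0) (K := K)
    (ε := 0) (a := y₀) (b := y₁)
    (fun y hy => ((hd y hy).continuousAt).continuousWithinAt)
    (fun y hy => ((hd y ⟨hy.1, hy.2.le⟩).hasDerivWithinAt))
    (by simp [h0]) (fun y hy => by simpa using hb y ⟨hy.1, hy.2.le⟩)
    y₁ ⟨h01, le_rfl⟩
  rw [gronwallBound_ε0] at this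
  simp only [zero_mul] at this
  exact norm_le_zero_iff.mp this

/-- leftward version -/
lemma aux_gron' (f f' : ℝ → ℝ) (K y₀ y₁ : ℝ) (h01 : y₀ ≤ y₁)
    (hd : ∀ y ∈ Icc y₀ y₁, HasDerivAt f (f' y) y)
    (hb : ∀ y ∈ Icc y₀ y₁, |f' y| ≤ K * |f y|)
    (h0 : f y₁ = 0) : f y₀ = 0 := by
  have key : (fun t => f (y₀ + y₁ - t)) y₁ = 0 := by
    apply aux_gron (fun t => f (y₀ + y₁ - t)) (fun t => -f' (y₀ + y₁ - t)) K y₀ y₁ h01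
    · intro y hy
      have h1 : HasDerivAt (fun t : ℝ => y₀ + y₁ - t) (-1) y := by
        simpa using (hasDerivAt_id y).const_sub (y₀ + y₁)
      have h2 : y₀ + y₁ - y ∈ Icc y₀ y₁ := ⟨by linarith [hy.2], by linarith [hy.1]⟩
      have h3 := (hd _ h2).comp y h1
      rw [mul_neg_one] at h3
      exact h3
    · intro y hy
      have h2 : y₀ + y₁ - y ∈ Icc y₀ y₁ := ⟨by linarith [hy.2], by linarith [hy.1]⟩
      simpa using hb _ h2
    · simpa using h0
  simpa using key

/-- Constant sign via IVT. -/
lemma aux_sign (r : ℝ → ℝ) (hc : ContinuousOn r (Ioo (-1:ℝ) 1))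
    (hne : ∀ y ∈ Ioo (-1:ℝ) 1, r y ≠ 0) (x y : ℝ) (hx : x ∈ Ioo (-1:ℝ) 1)
    (hy : y ∈ Ioo (-1:ℝ) 1) (hrx : 0 < r x) : 0 < r y := by
  rcases lt_trichotomy (r y) 0 with h | h | h
  · exfalso
    have hsub : uIcc x y ⊆ Ioo (-1:ℝ) 1 := by
      apply Set.OrdConnected.uIcc_subset (Set.ordConnected_Ioo) hx hy
    have := intermediate_value_uIcc (hc.mono hsub)
    have h0 : (0:ℝ) ∈ uIcc (r x) (r y) := by
      rw [mem_uIcc]; right; exact ⟨h.le, hrx.le⟩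
    obtain ⟨z, hz, hz0⟩ := this h0
    exact hne z (hsub hz) hz0
  · exact absurd h (hne y hy)
  · exact h

lemma aux_mono (f f' : ℝ → ℝ) (y₀ : ℝ)
    (hd : ∀ y ∈ Ico y₀ (1:ℝ), HasDerivAt f (f' y) y)
    (hd' : ∀ y ∈ Ioo y₀ (1:ℝ), 0 ≤ f' y) : MonotoneOn f (Ico y₀ (1:ℝ)) := by
  apply monotoneOn_of_deriv_nonneg (convex_Ico _ _)
  · exact fun y hy => ((hd y hy).continuousAt).continuousWithinAt
  · intro y hy
    rw [interior_Ico] at hy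
    exact ((hd y ⟨hy.1.le, hy.2⟩).differentiableAt).differentiableWithinAt
  · intro y hy
    rw [interior_Ico] at hy
    rw [(hd y ⟨hy.1.le, hy.2⟩).deriv]
    exact hd' y hy

lemma aux_anti (f f' : ℝ → ℝ) (y₀ : ℝ)
    (hd : ∀ y ∈ Ico y₀ (1:ℝ), HasDerivAt f (f' y) y)
    (hd' : ∀ y ∈ Ioo y₀ (1:ℝ), f' y ≤ 0) : AntitoneOn f (Ico y₀ (1:ℝ)) := by
  apply antitoneOn_of_deriv_nonpos (convex_Ico _ _)
  · exact fun y hy => ((hd y hy).continuousAt).continuousWithinAt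
  · intro y hy
    rw [interior_Ico] at hy
    exact ((hd y ⟨hy.1.le, hy.2⟩).differentiableAt).differentiableWithinAt
  · intro y hy
    rw [interior_Ico] at hy
    rw [(hd y ⟨hy.1.le, hy.2⟩).deriv]
    exact hd' y hy

lemma main_real (k l : ℕ) (d M : ℝ) (hd0 : 0 < d)
    (a b q r F G : ℝ → ℝ)
    (hFdef : ∀ y, F y = (l:ℝ) * (a y + b y)^k * (2 * r y)^(l-1))
    (hGdef : ∀ y, G y = (k:ℝ) * (a y + b y)^(k-1) * (2 * r y)^l)
    (ha0 : ∀ y ∈ Ioo (-1:ℝ) 1, 0 ≤ a y)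
    (hb0 : ∀ y ∈ Ioo (-1:ℝ) 1, 0 ≤ b y)
    (hq2 : ∀ y ∈ Ioo (-1:ℝ) 1, q y^2 ≤ a y * b y)
    (hr2 : ∀ y ∈ Ioo (-1:ℝ) 1, r y^2 ≤ a y * b y)
    (haM : ∀ y ∈ Ioo (-1:ℝ) 1, a y ≤ M)
    (hbM : ∀ y ∈ Ioo (-1:ℝ) 1, b y ≤ M)
    (hda : ∀ y ∈ Ioo (-1:ℝ) 1, HasDerivAt a ((2*F y*q y - 2*d*a y)/(1+y)) y)
    (hdb : ∀ y ∈ Ioo (-1:ℝ) 1, HasDerivAt b ((2*F y*q y + 2*d*b y)/(1-y)) y)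
    (hdq : ∀ y ∈ Ioo (-1:ℝ) 1, HasDerivAt q
      ((F y*b y + G y*r y - d*q y)/(1+y) + (F y*a y + G y*r y + d*q y)/(1-y)) y)
    (hdr : ∀ y ∈ Ioo (-1:ℝ) 1, HasDerivAt r
      ((-(G y*q y) - d*r y)/(1+y) + (-(G y*q y) + d*r y)/(1-y)) y) :
    ∀ y ∈ Ioo (-1:ℝ) 1, a y = 0 ∧ b y = 0 := by
  have hM0 : 0 ≤ M := le_trans (ha0 0 (by norm_num)) (haM 0 (by norm_num))
  -- weight derivative helpers
  have hwp : ∀ (e y : ℝ), -1 < y → HasDerivAt (fun t:ℝ => (1+t)^e) (e*(1+y)^(e-1)) y := by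
    intro e y hy
    have h1 : HasDerivAt (fun t:ℝ => 1+t) 1 y := by simpa using (hasDerivAt_id y).const_add (1:ℝ)
    simpa using h1.rpow_const (p := e) (Or.inl (by linarith : (1:ℝ)+y ≠ 0))
  have hwm : ∀ (e y : ℝ), y < 1 → HasDerivAt (fun t:ℝ => (1-t)^e) (-(e*(1-y)^(e-1))) y := by
    intro e y hy
    have h1 : HasDerivAt (fun t:ℝ => 1-t) (-1) y := by simpa using (hasDerivAt_id y).const_sub (1:ℝ)
    have h2 := h1.rpow_const (p := e) (Or.inl (by linarith : (1:ℝ)-y ≠ 0))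
    convert h2 using 1; ring
  set c : ℝ := 2*d with hc
  have hc0 : 0 < c := by positivity
  -- the weighted functions
  set al : ℝ → ℝ := fun y => (1+y)^c * a y with hal
  set be : ℝ → ℝ := fun y => (1-y)^c * b y with hbe
  set ta : ℝ → ℝ := fun y => ((1+y)^d * (1-y)^d) * q y with hta
  have hdal : ∀ y ∈ Ioo (-1:ℝ) 1, HasDerivAt al ((1+y)^(c-1) * (2*F y*q y)) y := by
    intro y hy
    have h1 := (hwp c y hy.1).mul (hda y hy)
    convert h1 using 1
    · rfl
    · rfl
    · rfl
    have h1y : (0:ℝ) < 1+y := by linarith [hy.1]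
    have hcc : (1+y)^c = (1+y)^(c-1)*(1+y) := by
      rw [Real.rpow_sub h1y, Real.rpow_one]; field_simp
    rw [hcc]; field_simp; ring
  have hdbe : ∀ y ∈ Ioo (-1:ℝ) 1, HasDerivAt be ((1-y)^(c-1) * (2*F y*q y)) y := by
    intro y hy
    have h1 := (hwm c y hy.2).mul (hdb y hy)
    convert h1 using 1
    · rfl
    · rfl
    · rfl
    have h1y : (0:ℝ) < 1-y := by linarith [hy.2]
    have hcc : (1-y)^c = (1-y)^(c-1)*(1-y) := by
      rw [Real.rpow_sub h1y, Real.rpow_one]; field_simp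
    rw [hcc]; field_simp; ring
  have hdta : ∀ y ∈ Ioo (-1:ℝ) 1, HasDerivAt ta
      (((1+y)^d*(1-y)^d) * ((F y*b y + G y*r y)/(1+y) + (F y*a y + G y*r y)/(1-y))) y := by
    intro y hy
    have h1 := ((hwp d y hy.1).mul (hwm d y hy.2)).mul (hdq y hy)
    convert h1 using 1
    · rfl
    · rfl
    · rfl
    have h1y : (0:ℝ) < 1+y := by linarith [hy.1]
    have h2y : (0:ℝ) < 1-y := by linarith [hy.2]
    have hcc1 : (1+y)^d = (1+y)^(d-1)*(1+y) := by
      rw [Real.rpow_sub h1y, Real.rpow_one]; field_simp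
    have hcc2 : (1-y)^d = (1-y)^(d-1)*(1-y) := by
      rw [Real.rpow_sub h2y, Real.rpow_one]; field_simp
    simp only [Pi.mul_apply]
    rw [hcc1, hcc2]; field_simp; ring
  -- N and its derivative
  set N : ℝ → ℝ := fun y => (a y + b y)^k * (2*r y)^l with hN
  have hdN : ∀ y ∈ Ioo (-1:ℝ) 1, HasDerivAt N
      (c * ((k:ℝ)*(a y+b y)^(k-1)*(2*r y)^l*(b y/(1-y) - a y/(1+y))
        + (l:ℝ)*(a y + b y)^k*(2*r y)^(l-1)*(r y/(1-y) - r y/(1+y)))) y := by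
    intro y hy
    have h1 := (((hda y hy).add (hdb y hy)).pow k).mul (((hdr y hy).const_mul (2:ℝ)).pow l)
    convert h1 using 1
    · rfl
    · rfl
    · rfl
    have h1y : (0:ℝ) < 1+y := by linarith [hy.1]
    have h2y : (0:ℝ) < 1-y := by linarith [hy.2]
    simp only [Pi.mul_apply, Pi.pow_apply, Pi.add_apply, hc]
    rw [hFdef, hGdef]
    field_simp
    ring
  have hrcont : ContinuousOn r (Ioo (-1:ℝ) 1) :=
    fun y hy => ((hdr y hy).continuousAt).continuousWithinAt
  have habnn : ∀ y ∈ Ioo (-1:ℝ) 1, (0:ℝ) ≤ a y + b y :=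
    fun y hy => by linarith [ha0 y hy, hb0 y hy]
  -- the sign trichotomy
  have hC0 : (∀ y ∈ Ioo (-1:ℝ) 1, F y = 0) ∨
      ((∀ y ∈ Ioo (-1:ℝ) 1, 0 ≤ F y) ∧ (∀ y ∈ Ioo (-1:ℝ) 1, 0 ≤ G y * r y)) ∨
      ((∀ y ∈ Ioo (-1:ℝ) 1, F y ≤ 0) ∧ (∀ y ∈ Ioo (-1:ℝ) 1, G y * r y ≤ 0)) := by
    rcases Nat.even_or_odd l with hev | hod
    · rcases Nat.eq_zero_or_pos l with hl0 | hlpos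
      · left; intro y hy; rw [hFdef, hl0]; simp
      · have hl2 : 2 ≤ l := by obtain ⟨m, hm⟩ := hev; omega
        by_cases hvanish : ∃ y₀ ∈ Ioo (-1:ℝ) 1, N y₀ = 0
        · -- Gronwall: N ≡ 0, hence r ≡ 0, hence F ≡ 0
          left
          obtain ⟨y₀, hy₀, hNy₀⟩ := hvanish
          have hNzero : ∀ y ∈ Ioo (-1:ℝ) 1, N y = 0 := by
            have key : ∀ z w : ℝ, z ∈ Ioo (-1:ℝ) 1 → w ∈ Ioo (-1:ℝ) 1 → z ≤ w →
                ∀ t ∈ Icc z w, |c * ((k:ℝ)*(a t+b t)^(k-1)*(2*r t)^l*(b t/(1-t) - a t/(1+t))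
                  + (l:ℝ)*(a t + b t)^k*(2*r t)^(l-1)*(r t/(1-t) - r t/(1+t)))|
                  ≤ (c*((k:ℝ)+(l:ℝ))*((1+z)⁻¹ + (1-w)⁻¹)) * |N t| := by
              intro z w hz hw hzw t ht
              have ht' : t ∈ Ioo (-1:ℝ) 1 := ⟨lt_of_lt_of_le hz.1 ht.1, lt_of_le_of_lt ht.2 hw.2⟩
              have h1t : (0:ℝ) < 1+t := by linarith [ht'.1]
              have h2t : (0:ℝ) < 1-t := by linarith [ht'.2]
              have h1z : (0:ℝ) < 1+z := by linarith [hz.1]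
              have h2w : (0:ℝ) < 1-w := by linarith [hw.2]
              have hinv1 : (1+t)⁻¹ ≤ (1+z)⁻¹ := by
                apply inv_anti₀ h1z; linarith [ht.1]
              have hinv2 : (1-t)⁻¹ ≤ (1-w)⁻¹ := by
                apply inv_anti₀ h2w; linarith [ht.2]
              have hA : (0:ℝ) ≤ a t + b t := habnn t ht'
              have hRl : (0:ℝ) ≤ (2*r t)^l := hev.pow_nonneg _
              have hNt : (0:ℝ) ≤ N t := mul_nonneg (pow_nonneg hA k) hRl
              have habs : |N t| = N t := abs_of_nonneg hNt
              have hrr : (2*r t)^(l-1) * r t = (2*r t)^l / 2 := by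
                obtain ⟨m, hm⟩ : ∃ m, l = m + 1 := ⟨l-1, by omega⟩
                subst hm
                rw [pow_succ]; simp; ring
              have hl3 : (l:ℝ)*(a t + b t)^k*((2*r t)^(l-1)*(r t)) = (l:ℝ)/2 * N t := by
                rw [hrr]; simp only [hN]; ring
              have hk1 : (k:ℝ)*(a t+b t)^(k-1)*(2*r t)^l*(b t) ≤ (k:ℝ) * N t := by
                rcases Nat.eq_zero_or_pos k with hk0 | hkpos
                · rw [hk0]; simp
                · obtain ⟨m, rfl⟩ : ∃ m, k = m + 1 := ⟨k-1, by omega⟩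
                  have hstep : (a t + b t)^m * b t ≤ (a t+b t)^(m+1) := by
                    rw [pow_succ]
                    exact mul_le_mul_of_nonneg_left (by linarith [ha0 t ht']) (pow_nonneg hA m)
                  calc ((m+1:ℕ):ℝ)*(a t+b t)^(m+1-1)*(2*r t)^l*(b t)
                      = ((m+1:ℕ):ℝ)*(2*r t)^l*((a t+b t)^m * b t) := by
                        rw [Nat.add_sub_cancel]; ring
                    _ ≤ ((m+1:ℕ):ℝ)*(2*r t)^l*((a t+b t)^(m+1)) := by
                        exact mul_le_mul_of_nonneg_left hstep (by positivity)
                    _ = ((m+1:ℕ):ℝ) * N t := by simp only [hN]; ring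
              have hk2 : (k:ℝ)*(a t+b t)^(k-1)*(2*r t)^l*(a t) ≤ (k:ℝ) * N t := by
                rcases Nat.eq_zero_or_pos k with hk0 | hkpos
                · rw [hk0]; simp
                · obtain ⟨m, rfl⟩ : ∃ m, k = m + 1 := ⟨k-1, by omega⟩
                  have hstep : (a t + b t)^m * a t ≤ (a t+b t)^(m+1) := by
                    rw [pow_succ]
                    exact mul_le_mul_of_nonneg_left (by linarith [hb0 t ht']) (pow_nonneg hA m)
                  calc ((m+1:ℕ):ℝ)*(a t+b t)^(m+1-1)*(2*r t)^l*(a t)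
                      = ((m+1:ℕ):ℝ)*(2*r t)^l*((a t+b t)^m * a t) := by
                        rw [Nat.add_sub_cancel]; ring
                    _ ≤ ((m+1:ℕ):ℝ)*(2*r t)^l*((a t+b t)^(m+1)) := by
                        exact mul_le_mul_of_nonneg_left hstep (by positivity)
                    _ = ((m+1:ℕ):ℝ) * N t := by simp only [hN]; ring
              have hk3 : (0:ℝ) ≤ (k:ℝ)*(a t+b t)^(k-1)*(2*r t)^l*(b t) := by
                have h := hb0 t ht'
                have : (0:ℝ) ≤ (a t + b t)^(k-1) := pow_nonneg hA _
                positivity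
              have hk4 : (0:ℝ) ≤ (k:ℝ)*(a t+b t)^(k-1)*(2*r t)^l*(a t) := by
                have h := ha0 t ht'
                have : (0:ℝ) ≤ (a t + b t)^(k-1) := pow_nonneg hA _
                positivity
              -- reduce to the c-free inequality
              rw [abs_mul, _root_.abs_of_nonneg hc0.le, habs, mul_assoc c, mul_assoc c]
              apply mul_le_mul_of_nonneg_left _ hc0.le
              set T1 := (k:ℝ)*(a t+b t)^(k-1)*(2*r t)^l*(b t) with hT1
              set T2 := (k:ℝ)*(a t+b t)^(k-1)*(2*r t)^l*(a t) with hT2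
              have hX0 : (k:ℝ)*(a t+b t)^(k-1)*(2*r t)^l*(b t/(1-t) - a t/(1+t))
                  + (l:ℝ)*(a t + b t)^k*(2*r t)^(l-1)*(r t/(1-t) - r t/(1+t))
                  = T1*(1-t)⁻¹ - T2*(1+t)⁻¹ + ((l:ℝ)/2*N t)*(1-t)⁻¹ - ((l:ℝ)/2*N t)*(1+t)⁻¹ := by
                rw [← hl3, hT1, hT2]
                field_simp
                ring
              rw [hX0]
              have e1 : T1*(1-t)⁻¹ ≤ ((k:ℝ)*N t)*(1-w)⁻¹ := by
                calc T1*(1-t)⁻¹ ≤ ((k:ℝ)*N t)*(1-t)⁻¹ :=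
                      mul_le_mul_of_nonneg_right hk1 (by positivity)
                  _ ≤ ((k:ℝ)*N t)*(1-w)⁻¹ := by
                      apply mul_le_mul_of_nonneg_left hinv2; positivity
              have e2 : T2*(1+t)⁻¹ ≤ ((k:ℝ)*N t)*(1+z)⁻¹ := by
                calc T2*(1+t)⁻¹ ≤ ((k:ℝ)*N t)*(1+t)⁻¹ :=
                      mul_le_mul_of_nonneg_right hk2 (by positivity)
                  _ ≤ ((k:ℝ)*N t)*(1+z)⁻¹ := by
                      apply mul_le_mul_of_nonneg_left hinv1; positivity
              have e3 : ((l:ℝ)/2*N t)*(1-t)⁻¹ ≤ ((l:ℝ)/2*N t)*(1-w)⁻¹ := by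
                apply mul_le_mul_of_nonneg_left hinv2; positivity
              have e4 : ((l:ℝ)/2*N t)*(1+t)⁻¹ ≤ ((l:ℝ)/2*N t)*(1+z)⁻¹ := by
                apply mul_le_mul_of_nonneg_left hinv1; positivity
              have e1' : (0:ℝ) ≤ T1*(1-t)⁻¹ := mul_nonneg hk3 (by positivity)
              have e2' : (0:ℝ) ≤ T2*(1+t)⁻¹ := mul_nonneg hk4 (by positivity)
              have e3' : (0:ℝ) ≤ ((l:ℝ)/2*N t)*(1-t)⁻¹ := by positivity
              have e4' : (0:ℝ) ≤ ((l:ℝ)/2*N t)*(1+t)⁻¹ := by positivity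
              have f1 : (0:ℝ) ≤ N t * (1-w)⁻¹ := by positivity
              have f2 : (0:ℝ) ≤ N t * (1+z)⁻¹ := by positivity
              rw [abs_le]
              constructor <;> nlinarith [e1, e2, e3, e4, e1', e2', e3', e4', f1, f2]
            intro y hy
            rcases le_total y₀ y with hle | hle
            · exact aux_gron N _ _ y₀ y hle
                (fun t ht => hdN t ⟨lt_of_lt_of_le hy₀.1 ht.1, lt_of_le_of_lt ht.2 hy.2⟩)
                (key y₀ y hy₀ hy hle) hNy₀
            · exact aux_gron' N _ _ y y₀ hle
                (fun t ht => hdN t ⟨lt_of_lt_of_le hy.1 ht.1, lt_of_le_of_lt ht.2 hy₀.2⟩)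
                (key y y₀ hy hy₀ hle) hNy₀
          intro y hy
          have hr0 : r y = 0 := by
            have hNy := hNzero y hy
            rcases mul_eq_zero.mp hNy with h | h
            · have hab : a y + b y = 0 := by
                rcases Nat.eq_zero_or_pos k with hk0 | hkpos
                · rw [hk0] at h; norm_num at h
                · exact pow_eq_zero_iff (by omega) |>.mp h
              have hay : a y = 0 := by linarith [ha0 y hy, hb0 y hy]
              have hby : b y = 0 := by linarith [ha0 y hy, hb0 y hy]
              have := hr2 y hy
              nlinarith [sq_nonneg (r y)]
            · have : 2 * r y = 0 := pow_eq_zero_iff (by omega : l ≠ 0) |>.mp h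
              linarith
          rw [hFdef, hr0]
          have hne : l - 1 ≠ 0 := by omega
          simp [hne]
        · -- N never vanishes : r has constant sign
          push_neg at hvanish
          have hrne : ∀ y ∈ Ioo (-1:ℝ) 1, r y ≠ 0 := by
            intro y hy h0
            apply hvanish y hy
            simp only [hN, h0, mul_zero]
            rw [zero_pow (by omega : l ≠ 0), mul_zero]
          have h0J : (0:ℝ) ∈ Ioo (-1:ℝ) 1 := by norm_num
          have hoddl1 : Odd (l-1) := Nat.Even.sub_odd (by omega) hev odd_one
          rcases (hrne 0 h0J).lt_or_gt with hneg | hpos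
          · right; right
            have hrneg : ∀ y ∈ Ioo (-1:ℝ) 1, r y < 0 := by
              intro y hy
              have h1 : (0:ℝ) < -(r 0) := by linarith
              have := aux_sign (fun t => -(r t)) (hrcont.neg)
                (fun t ht => neg_ne_zero.mpr (hrne t ht)) 0 y h0J hy (by simpa using h1)
              have h2 : (0:ℝ) < -(r y) := by simpa using this
              linarith
            constructor
            · intro y hy
              rw [hFdef]
              have h2r : 2*r y < 0 := by linarith [hrneg y hy]
              have hpow : (2*r y)^(l-1) < 0 := hoddl1.pow_neg h2r
              have hab : (0:ℝ) ≤ (a y + b y)^k := pow_nonneg (habnn y hy) k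
              apply mul_nonpos_of_nonneg_of_nonpos
              · positivity
              · exact hpow.le
            · intro y hy
              rw [hGdef]
              have hpow : (0:ℝ) ≤ (2*r y)^l := hev.pow_nonneg _
              have hab : (0:ℝ) ≤ (a y + b y)^(k-1) := pow_nonneg (habnn y hy) _
              apply mul_nonpos_of_nonneg_of_nonpos
              · positivity
              · exact (hrneg y hy).le
          · right; left
            have hrpos : ∀ y ∈ Ioo (-1:ℝ) 1, 0 < r y := by
              intro y hy
              exact aux_sign r hrcont hrne 0 y h0J hy hpos
            constructor
            · intro y hy
              rw [hFdef]
              have hpow : (0:ℝ) ≤ (2*r y)^(l-1) :=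
                (pow_pos (by linarith [hrpos y hy] : (0:ℝ) < 2*r y) (l-1)).le
              have hab : (0:ℝ) ≤ (a y + b y)^k := pow_nonneg (habnn y hy) k
              exact mul_nonneg (mul_nonneg (Nat.cast_nonneg l) hab) hpow
            · intro y hy
              rw [hGdef]
              have hpow : (0:ℝ) ≤ (2*r y)^l := hev.pow_nonneg _
              have hab : (0:ℝ) ≤ (a y + b y)^(k-1) := pow_nonneg (habnn y hy) _
              exact mul_nonneg (mul_nonneg (mul_nonneg (Nat.cast_nonneg k) hab) hpow)
                (hrpos y hy).le
    · -- l odd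
      right; left
      constructor
      · intro y hy
        rw [hFdef]
        have heven : Even (l-1) := Nat.Odd.sub_odd hod odd_one
        exact mul_nonneg (mul_nonneg (Nat.cast_nonneg l) (pow_nonneg (habnn y hy) k))
          (heven.pow_nonneg _)
      · intro y hy
        rw [hGdef]
        have h1 : (2*r y)^l * r y = 2^l * r y^(l+1) := by rw [mul_pow, pow_succ]; ring
        have heven : Even (l+1) := Odd.add_one hod
        calc (k:ℝ) * (a y + b y)^(k-1) * (2*r y)^l * r y
            = (k:ℝ) * (a y + b y)^(k-1) * ((2*r y)^l * r y) := by ring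
          _ = (k:ℝ) * (a y + b y)^(k-1) * (2^l * r y^(l+1)) := by rw [h1]
          _ ≥ 0 := by
              have h2 : (0:ℝ) ≤ r y^(l+1) := heven.pow_nonneg _
              have h3 : (0:ℝ) ≤ (a y + b y)^(k-1) := pow_nonneg (habnn y hy) _
              positivity
  -- limits of the weighted functions at the endpoints
  have hlim1 : Tendsto (fun y:ℝ => (1+y)^c) (𝓝[>] (-1:ℝ)) (𝓝 0) := by
    have h0 : Tendsto (fun y:ℝ => 1+y) (𝓝[>] (-1:ℝ)) (𝓝 0) := by
      have h1 : Tendsto (fun y:ℝ => 1+y) (𝓝 (-1:ℝ)) (𝓝 0) := by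
        exact (continuous_const.add continuous_id).tendsto' (-1:ℝ) 0 (by norm_num)
      exact h1.mono_left nhdsWithin_le_nhds
    have h1 : ContinuousAt (fun x:ℝ => x ^ c) 0 := Real.continuousAt_rpow_const 0 c (Or.inr hc0.le)
    have h2 := h1.tendsto.comp h0
    rw [Real.zero_rpow hc0.ne'] at h2
    exact h2
  have hlim2 : Tendsto (fun y:ℝ => (1-y)^c) (𝓝[<] (1:ℝ)) (𝓝 0) := by
    have h0 : Tendsto (fun y:ℝ => 1-y) (𝓝[<] (1:ℝ)) (𝓝 0) := by
      have h1 : Tendsto (fun y:ℝ => 1-y) (𝓝 (1:ℝ)) (𝓝 0) := by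
        exact (continuous_const.sub continuous_id).tendsto' (1:ℝ) 0 (by norm_num)
      exact h1.mono_left nhdsWithin_le_nhds
    have h1 : ContinuousAt (fun x:ℝ => x ^ c) 0 := Real.continuousAt_rpow_const 0 c (Or.inr hc0.le)
    have h2 := h1.tendsto.comp h0
    rw [Real.zero_rpow hc0.ne'] at h2
    exact h2
  have hlimal : Tendsto al (𝓝[>] (-1:ℝ)) (𝓝 0) := by
    apply squeeze_zero' (g := fun y => (1+y)^c * M)
    · filter_upwards [Ioo_mem_nhdsGT_of_mem (⟨le_rfl, by norm_num⟩ : (-1:ℝ) ∈ Ico (-1:ℝ) 1)] with y hy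
      exact mul_nonneg (Real.rpow_nonneg (by linarith [hy.1]) c) (ha0 y hy)
    · filter_upwards [Ioo_mem_nhdsGT_of_mem (⟨le_rfl, by norm_num⟩ : (-1:ℝ) ∈ Ico (-1:ℝ) 1)] with y hy
      exact mul_le_mul_of_nonneg_left (haM y hy) (Real.rpow_nonneg (by linarith [hy.1]) c)
    · simpa using hlim1.mul_const M
  have hlimbe : Tendsto be (𝓝[<] (1:ℝ)) (𝓝 0) := by
    apply squeeze_zero' (g := fun y => (1-y)^c * M)
    · filter_upwards [Ioo_mem_nhdsLT_of_mem (⟨by norm_num, le_rfl⟩ : (1:ℝ) ∈ Ioc (-1:ℝ) 1)] with y hy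
      exact mul_nonneg (Real.rpow_nonneg (by linarith [hy.2]) c) (hb0 y hy)
    · filter_upwards [Ioo_mem_nhdsLT_of_mem (⟨by norm_num, le_rfl⟩ : (1:ℝ) ∈ Ioc (-1:ℝ) 1)] with y hy
      exact mul_le_mul_of_nonneg_left (hbM y hy) (Real.rpow_nonneg (by linarith [hy.2]) c)
    · simpa using hlim2.mul_const M
  -- the key sign claim : F q ≤ 0 everywhere
  have hFq : ∀ y ∈ Ioo (-1:ℝ) 1, F y * q y ≤ 0 := by
    have sub : ∀ s : ℝ, s = 1 ∨ s = -1 → (∀ y ∈ Ioo (-1:ℝ) 1, 0 ≤ s * F y) →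
        (∀ y ∈ Ioo (-1:ℝ) 1, 0 ≤ s * (G y * r y)) →
        ∀ y₀ ∈ Ioo (-1:ℝ) 1, s * q y₀ ≤ 0 := by
      intro s hs hsF hsGr y₀ hy₀
      have hss : s * s = 1 := by rcases hs with h|h <;> rw [h] <;> norm_num
      by_contra hq0
      push_neg at hq0
      -- s*ta is monotone on [y₀,1)
      have hmono : MonotoneOn (fun y => s * ta y) (Ico y₀ (1:ℝ)) := by
        apply aux_mono _ (fun y => s * (((1+y)^d*(1-y)^d) *
          ((F y*b y + G y*r y)/(1+y) + (F y*a y + G y*r y)/(1-y))))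
        · intro y hy
          have hyJ : y ∈ Ioo (-1:ℝ) 1 := ⟨lt_of_lt_of_le hy₀.1 hy.1, hy.2⟩
          exact (hdta y hyJ).const_mul s
        · intro y hy
          have hyJ : y ∈ Ioo (-1:ℝ) 1 := ⟨lt_trans hy₀.1 hy.1, hy.2⟩
          have h1y : (0:ℝ) < 1+y := by linarith [hyJ.1]
          have h2y : (0:ℝ) < 1-y := by linarith [hyJ.2]
          have hW : (0:ℝ) ≤ (1+y)^d*(1-y)^d :=
            mul_nonneg (Real.rpow_nonneg h1y.le d) (Real.rpow_nonneg h2y.le d)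
          have heq : s * (((1+y)^d*(1-y)^d) *
              ((F y*b y + G y*r y)/(1+y) + (F y*a y + G y*r y)/(1-y)))
              = ((1+y)^d*(1-y)^d) *
              (((s*F y)*b y + s*(G y*r y))/(1+y) + ((s*F y)*a y + s*(G y*r y))/(1-y)) := by
            ring
          rw [heq]
          apply mul_nonneg hW
          apply add_nonneg
          · apply div_nonneg _ h1y.le
            exact add_nonneg (mul_nonneg (hsF y hyJ) (hb0 y hyJ)) (hsGr y hyJ)
          · apply div_nonneg _ h2y.le
            exact add_nonneg (mul_nonneg (hsF y hyJ) (ha0 y hyJ)) (hsGr y hyJ)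
      -- hence s*q > 0 on [y₀,1)
      have hsq : ∀ y ∈ Ico y₀ (1:ℝ), 0 < s * q y := by
        intro y hy
        have hyJ : y ∈ Ioo (-1:ℝ) 1 := ⟨lt_of_lt_of_le hy₀.1 hy.1, hy.2⟩
        have h1 := hmono (⟨le_rfl, hy₀.2⟩ : y₀ ∈ Ico y₀ (1:ℝ)) hy hy.1
        have hW0 : (0:ℝ) < (1+y₀)^d*(1-y₀)^d :=
          mul_pos (Real.rpow_pos_of_pos (by linarith [hy₀.1]) d)
            (Real.rpow_pos_of_pos (by linarith [hy₀.2]) d)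
        have hWy : (0:ℝ) < (1+y)^d*(1-y)^d :=
          mul_pos (Real.rpow_pos_of_pos (by linarith [hyJ.1]) d)
            (Real.rpow_pos_of_pos (by linarith [hyJ.2]) d)
        have h2 : (0:ℝ) < s * ta y₀ := by
          have : s * ta y₀ = ((1+y₀)^d*(1-y₀)^d) * (s * q y₀) := by
            simp only [hta]; ring
          rw [this]
          exact mul_pos hW0 hq0
        have h3 : (0:ℝ) < s * ta y := lt_of_lt_of_le h2 h1
        have h4 : s * ta y = ((1+y)^d*(1-y)^d) * (s * q y) := by
          simp only [hta]; ring
        rw [h4] at h3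
        nlinarith [h3, hWy]
      -- b vanishes at the midpoint, contradiction
      set y₁ : ℝ := (y₀+1)/2 with hy₁def
      have hy₁J : y₁ ∈ Ioo (-1:ℝ) 1 := by
        constructor <;> [linarith [hy₀.1]; linarith [hy₀.2]]
      have hy₀y₁ : y₀ < y₁ := by
        simp only [hy₁def]; linarith [hy₀.2]
      have hbe0 : be y₁ = 0 := by
        apply aux_L2 be (fun t => (1-t)^(c-1) * (2*F t*q t)) y₁ hy₁J
        · intro t ht
          exact hdbe t ⟨lt_of_lt_of_le hy₁J.1 ht.1, ht.2⟩
        · intro t ht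
          have htJ : t ∈ Ioo (-1:ℝ) 1 := ⟨lt_trans hy₁J.1 ht.1, ht.2⟩
          have hsq' := hsq t ⟨le_of_lt (lt_trans hy₀y₁ ht.1), ht.2⟩
          have hFqpos : 0 ≤ F t * q t := by
            have h1 := mul_nonneg (hsF t htJ) hsq'.le
            calc (0:ℝ) ≤ (s*F t)*(s*q t) := h1
              _ = (s*s)*(F t*q t) := by ring
              _ = F t * q t := by rw [hss]; ring
          have hw : (0:ℝ) ≤ (1-t)^(c-1) := Real.rpow_nonneg (by linarith [htJ.2]) _
          have : (0:ℝ) ≤ 2*F t*q t := by linarith [hFqpos]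
          exact mul_nonneg hw this
        · exact mul_nonneg (Real.rpow_nonneg (by linarith [hy₁J.2]) c) (hb0 y₁ hy₁J)
        · exact hlimbe
      have hb0' : b y₁ = 0 := by
        have hW : (0:ℝ) < (1-y₁)^c := Real.rpow_pos_of_pos (by linarith [hy₁J.2]) c
        have : (1-y₁)^c * b y₁ = 0 := hbe0
        exact (mul_eq_zero.mp this).resolve_left hW.ne'
      have hq1 : q y₁ = 0 := by
        have h1 := hq2 y₁ hy₁J
        rw [hb0', mul_zero] at h1
        nlinarith [sq_nonneg (q y₁)]
      have := hsq y₁ ⟨hy₀y₁.le, hy₁J.2⟩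
      rw [hq1] at this
      simp at this
    rcases hC0 with hA | ⟨h1, h2⟩ | ⟨h1, h2⟩
    · intro y hy; rw [hA y hy]; simp
    · intro y hy
      have hqle := sub 1 (Or.inl rfl) (by simpa using h1) (by simpa using h2) y hy
      rw [one_mul] at hqle
      exact mul_nonpos_of_nonneg_of_nonpos (h1 y hy) hqle
    · intro y hy
      have hqle := sub (-1) (Or.inr rfl) (by intro t ht; simpa using h1 t ht)
        (by intro t ht; simpa using h2 t ht) y hy
      have hq0 : 0 ≤ q y := by nlinarith [hqle]
      exact mul_nonpos_of_nonpos_of_nonneg (h1 y hy) hq0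
  -- final phase : a ≡ 0, then q ≡ 0, then b ≡ 0
  have hazero : ∀ y ∈ Ioo (-1:ℝ) 1, a y = 0 := by
    intro y hy
    have hal0 : al y = 0 := by
      apply aux_L1 al (fun t => (1+t)^(c-1) * (2*F t*q t)) y hy hdal
      · intro t ht
        have hw : (0:ℝ) ≤ (1+t)^(c-1) := Real.rpow_nonneg (by linarith [ht.1]) _
        have h2 : 2*F t*q t ≤ 0 := by linarith [hFq t ht]
        exact mul_nonpos_of_nonneg_of_nonpos hw h2
      · exact mul_nonneg (Real.rpow_nonneg (by linarith [hy.1]) c) (ha0 y hy)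
      · exact hlimal
    have hW : (0:ℝ) < (1+y)^c := Real.rpow_pos_of_pos (by linarith [hy.1]) c
    have : (1+y)^c * a y = 0 := hal0
    exact (mul_eq_zero.mp this).resolve_left hW.ne'
  have hqzero : ∀ y ∈ Ioo (-1:ℝ) 1, q y = 0 := by
    intro y hy
    have h1 := hq2 y hy
    rw [hazero y hy, zero_mul] at h1
    nlinarith [sq_nonneg (q y)]
  have hbzero : ∀ y ∈ Ioo (-1:ℝ) 1, b y = 0 := by
    intro y hy
    have hbe0 : be y = 0 := by
      apply aux_L2 be (fun t => (1-t)^(c-1) * (2*F t*q t)) y hy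
      · intro t ht
        exact hdbe t ⟨lt_of_lt_of_le hy.1 ht.1, ht.2⟩
      · intro t ht
        have htJ : t ∈ Ioo (-1:ℝ) 1 := ⟨lt_trans hy.1 ht.1, ht.2⟩
        rw [hqzero t htJ]
        simp
      · exact mul_nonneg (Real.rpow_nonneg (by linarith [hy.2]) c) (hb0 y hy)
      · exact hlimbe
    have hW : (0:ℝ) < (1-y)^c := Real.rpow_pos_of_pos (by linarith [hy.2]) c
    have : (1-y)^c * b y = 0 := hbe0
    exact (mul_eq_zero.mp this).resolve_left hW.ne'
  exact fun y hy => ⟨hazero y hy, hbzero y hy⟩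

/-- nonexistence of bounded self-similar solutions on `(-1,1)`. -/
theorem no_bounded_selfsimilar (k l : ℕ) (hp : 1 ≤ k + l - 1) (U V : ℝ → ℂ)
    (hS : SolvesS k l U V (Ioo (-1 : ℝ) 1))
    (hbU : ∃ M : ℝ, ∀ y ∈ Ioo (-1 : ℝ) 1, ‖U y‖ ≤ M)
    (hbV : ∃ M : ℝ, ∀ y ∈ Ioo (-1 : ℝ) 1, ‖V y‖ ≤ M) :
    ∀ y ∈ Ioo (-1 : ℝ) 1, U y = 0 ∧ V y = 0 := by
  obtain ⟨hCU, hCV, hEq⟩ := hS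
  obtain ⟨M1, hM1⟩ := hbU
  obtain ⟨M2, hM2⟩ := hbV
  set P : ℝ := ((k + l - 1 : ℕ) : ℝ) with hPdef
  have hP1 : (1:ℝ) ≤ P := by simp only [hPdef]; exact_mod_cast hp
  have hP0 : (0:ℝ) < P := by linarith
  set d : ℝ := (2*P)⁻¹ with hddef
  have hd0 : (0:ℝ) < d := by positivity
  set a : ℝ → ℝ := fun y => (U y).re^2 + (U y).im^2 with hadef
  set b : ℝ → ℝ := fun y => (V y).re^2 + (V y).im^2 with hbdef
  set q : ℝ → ℝ := fun y => (U y).re*(V y).im - (U y).im*(V y).re with hqdef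
  set r : ℝ → ℝ := fun y => (U y).re*(V y).re + (U y).im*(V y).im with hrdef
  set F : ℝ → ℝ := fun y => (l:ℝ) * (a y + b y)^k * (2*r y)^(l-1) with hFdef
  set G : ℝ → ℝ := fun y => (k:ℝ) * (a y + b y)^(k-1) * (2*r y)^l with hGdef
  have hRfun : ∀ y, Rfun U V y = ((2 * r y : ℝ) : ℂ) := by
    intro y
    simp only [Rfun, hrdef]
    apply Complex.ext <;>
      simp [Complex.add_re, Complex.add_im, Complex.mul_re, Complex.mul_im] <;> ring
  have habs2 : ∀ y, (‖U y‖^2 + ‖V y‖^2 : ℝ) = a y + b y := by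
    intro y
    simp only [hadef, hbdef]
    rw [Complex.sq_norm, Complex.sq_norm, Complex.normSq_apply, Complex.normSq_apply]; ring
  have hFfun : ∀ y, Ffun k l U V y = ((F y : ℝ) : ℂ) := by
    intro y
    rw [Ffun, hRfun y, habs2 y, hFdef]
    push_cast
    ring
  have hGfun : ∀ y, Gfun k l U V y = ((G y : ℝ) : ℂ) := by
    intro y
    rw [Gfun, hRfun y, habs2 y, hGdef]
    push_cast
    ring
  have hc2 : (1 / (2 * ((k + l - 1 : ℕ) : ℂ))) = ((d : ℝ) : ℂ) := by
    have hne : ((k + l - 1 : ℕ) : ℂ) ≠ 0 := by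
      have : (1:ℝ) ≤ ((k+l-1:ℕ):ℝ) := by exact_mod_cast hp
      simp only [ne_eq, Nat.cast_eq_zero]
      omega
    rw [hddef, hPdef]
    push_cast
    rw [one_div]
  -- differentiability
  have hUd : ∀ y ∈ Ioo (-1:ℝ) 1, HasDerivAt U (deriv U y) y := fun y hy =>
    ((hCU.differentiableOn one_ne_zero).differentiableAt (isOpen_Ioo.mem_nhds hy)).hasDerivAt
  have hVd : ∀ y ∈ Ioo (-1:ℝ) 1, HasDerivAt V (deriv V y) y := fun y hy =>
    ((hCV.differentiableOn one_ne_zero).differentiableAt (isOpen_Ioo.mem_nhds hy)).hasDerivAt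
  -- the complex equations, solved for the derivative
  have hceq1 : ∀ y ∈ Ioo (-1:ℝ) 1, ((y:ℂ) + 1) * deriv U y
      = -Complex.I*(((F y : ℝ):ℂ) * V y + ((G y : ℝ):ℂ)*U y) - ((d:ℝ):ℂ) * U y := by
    intro y hy
    have e1 := (hEq y hy).1
    rw [hFfun y, hGfun y, hc2] at e1
    linear_combination (-Complex.I) * e1
      + (((y:ℂ)+1)*deriv U y + ((d:ℝ):ℂ)*U y) * Complex.I_mul_I
  have hceq2 : ∀ y ∈ Ioo (-1:ℝ) 1, ((y:ℂ) - 1) * deriv V y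
      = -Complex.I*(((F y : ℝ):ℂ) * U y + ((G y : ℝ):ℂ)*V y) - ((d:ℝ):ℂ) * V y := by
    intro y hy
    have e2 := (hEq y hy).2
    rw [hFfun y, hGfun y, hc2] at e2
    linear_combination (-Complex.I) * e2
      + (((y:ℂ)-1)*deriv V y + ((d:ℝ):ℂ)*V y) * Complex.I_mul_I
  -- component derivatives
  have hu1 : ∀ y ∈ Ioo (-1:ℝ) 1, HasDerivAt (fun t => (U t).re)
      ((F y*(V y).im + G y*(U y).im - d*(U y).re)/(1+y)) y := by
    intro y hy
    have h1y : (0:ℝ) < 1+y := by linarith [hy.1]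
    have h := Complex.reCLM.hasFDerivAt.comp_hasDerivAt y (hUd y hy)
    have he := congrArg Complex.re (hceq1 y hy)
    simp only [Complex.add_re, Complex.add_im, Complex.sub_re, Complex.sub_im,
      Complex.mul_re, Complex.mul_im, Complex.neg_re, Complex.neg_im, Complex.I_re,
      Complex.I_im, Complex.ofReal_re, Complex.ofReal_im, Complex.one_re, Complex.one_im] at he
    have hval : (deriv U y).re = (F y*(V y).im + G y*(U y).im - d*(U y).re)/(1+y) := by
      rw [eq_div_iff (ne_of_gt h1y)]
      linarith [he]
    rw [← hval]
    exact h
  have hu2 : ∀ y ∈ Ioo (-1:ℝ) 1, HasDerivAt (fun t => (U t).im)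
      ((-(F y*(V y).re + G y*(U y).re) - d*(U y).im)/(1+y)) y := by
    intro y hy
    have h1y : (0:ℝ) < 1+y := by linarith [hy.1]
    have h := Complex.imCLM.hasFDerivAt.comp_hasDerivAt y (hUd y hy)
    have he := congrArg Complex.im (hceq1 y hy)
    simp only [Complex.add_re, Complex.add_im, Complex.sub_re, Complex.sub_im,
      Complex.mul_re, Complex.mul_im, Complex.neg_re, Complex.neg_im, Complex.I_re,
      Complex.I_im, Complex.ofReal_re, Complex.ofReal_im, Complex.one_re, Complex.one_im] at he
    have hval : (deriv U y).im = (-(F y*(V y).re + G y*(U y).re) - d*(U y).im)/(1+y) := by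
      rw [eq_div_iff (ne_of_gt h1y)]
      linarith [he]
    rw [← hval]
    exact h
  have hv1 : ∀ y ∈ Ioo (-1:ℝ) 1, HasDerivAt (fun t => (V t).re)
      ((F y*(U y).im + G y*(V y).im - d*(V y).re)/(y-1)) y := by
    intro y hy
    have h2y : y - 1 ≠ 0 := sub_ne_zero.mpr (ne_of_lt hy.2)
    have h := Complex.reCLM.hasFDerivAt.comp_hasDerivAt y (hVd y hy)
    have he := congrArg Complex.re (hceq2 y hy)
    simp only [Complex.add_re, Complex.add_im, Complex.sub_re, Complex.sub_im,
      Complex.mul_re, Complex.mul_im, Complex.neg_re, Complex.neg_im, Complex.I_re,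
      Complex.I_im, Complex.ofReal_re, Complex.ofReal_im, Complex.one_re, Complex.one_im] at he
    have hval : (deriv V y).re = (F y*(U y).im + G y*(V y).im - d*(V y).re)/(y-1) := by
      rw [eq_div_iff h2y]
      linarith [he]
    rw [← hval]
    exact h
  have hv2 : ∀ y ∈ Ioo (-1:ℝ) 1, HasDerivAt (fun t => (V t).im)
      ((-(F y*(U y).re + G y*(V y).re) - d*(V y).im)/(y-1)) y := by
    intro y hy
    have h2y : y - 1 ≠ 0 := sub_ne_zero.mpr (ne_of_lt hy.2)
    have h := Complex.imCLM.hasFDerivAt.comp_hasDerivAt y (hVd y hy)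
    have he := congrArg Complex.im (hceq2 y hy)
    simp only [Complex.add_re, Complex.add_im, Complex.sub_re, Complex.sub_im,
      Complex.mul_re, Complex.mul_im, Complex.neg_re, Complex.neg_im, Complex.I_re,
      Complex.I_im, Complex.ofReal_re, Complex.ofReal_im, Complex.one_re, Complex.one_im] at he
    have hval : (deriv V y).im = (-(F y*(U y).re + G y*(V y).re) - d*(V y).im)/(y-1) := by
      rw [eq_div_iff h2y]
      linarith [he]
    rw [← hval]
    exact h
  -- assembled real ODEs
  have hda : ∀ y ∈ Ioo (-1:ℝ) 1, HasDerivAt a ((2*F y*q y - 2*d*a y)/(1+y)) y := by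
    intro y hy
    have h1y : (0:ℝ) < 1+y := by linarith [hy.1]
    have h := ((hu1 y hy).pow 2).add ((hu2 y hy).pow 2)
    refine h.congr_deriv ?_
    simp only [hadef, hqdef, Nat.cast_ofNat, pow_one]
    field_simp
    ring
  have hdb : ∀ y ∈ Ioo (-1:ℝ) 1, HasDerivAt b ((2*F y*q y + 2*d*b y)/(1-y)) y := by
    intro y hy
    have h2y : y - 1 ≠ 0 := sub_ne_zero.mpr (ne_of_lt hy.2)
    have h1y : (1:ℝ) - y ≠ 0 := by intro h; apply h2y; linarith
    have h := ((hv1 y hy).pow 2).add ((hv2 y hy).pow 2)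
    refine h.congr_deriv ?_
    simp only [hbdef, hqdef, Nat.cast_ofNat, pow_one]
    field_simp
    ring
  have hdq : ∀ y ∈ Ioo (-1:ℝ) 1, HasDerivAt q
      ((F y*b y + G y*r y - d*q y)/(1+y) + (F y*a y + G y*r y + d*q y)/(1-y)) y := by
    intro y hy
    have h1y : (0:ℝ) < 1+y := by linarith [hy.1]
    have h2y : y - 1 ≠ 0 := sub_ne_zero.mpr (ne_of_lt hy.2)
    have h1y' : (1:ℝ) - y ≠ 0 := by intro h; apply h2y; linarith
    have h := (((hu1 y hy).mul (hv2 y hy)).sub ((hu2 y hy).mul (hv1 y hy)))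
    refine h.congr_deriv ?_
    simp only [hadef, hbdef, hqdef, hrdef]
    field_simp
    ring
  have hdr : ∀ y ∈ Ioo (-1:ℝ) 1, HasDerivAt r
      ((-(G y*q y) - d*r y)/(1+y) + (-(G y*q y) + d*r y)/(1-y)) y := by
    intro y hy
    have h1y : (0:ℝ) < 1+y := by linarith [hy.1]
    have h2y : y - 1 ≠ 0 := sub_ne_zero.mpr (ne_of_lt hy.2)
    have h1y' : (1:ℝ) - y ≠ 0 := by intro h; apply h2y; linarith
    have h := (((hu1 y hy).mul (hv1 y hy)).add ((hu2 y hy).mul (hv2 y hy)))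
    refine h.congr_deriv ?_
    simp only [hqdef, hrdef]
    field_simp
    ring
  -- bounds
  set M : ℝ := max (M1^2) (M2^2) with hMdef
  have haM : ∀ y ∈ Ioo (-1:ℝ) 1, a y ≤ M := by
    intro y hy
    have h1 : a y = ‖U y‖^2 := by
      rw [Complex.sq_norm, Complex.normSq_apply, hadef]; ring
    have h2 : ‖U y‖^2 ≤ M1^2 :=
      pow_le_pow_left₀ (norm_nonneg _) (hM1 y hy) 2
    rw [h1]
    exact le_trans h2 (le_max_left _ _)
  have hbM : ∀ y ∈ Ioo (-1:ℝ) 1, b y ≤ M := by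
    intro y hy
    have h1 : b y = ‖V y‖^2 := by
      rw [Complex.sq_norm, Complex.normSq_apply, hbdef]; ring
    have h2 : ‖V y‖^2 ≤ M2^2 :=
      pow_le_pow_left₀ (norm_nonneg _) (hM2 y hy) 2
    rw [h1]
    exact le_trans h2 (le_max_right _ _)
  -- apply the real lemma
  have main := main_real k l d M hd0 a b q r F G (fun y => rfl) (fun y => rfl)
    (fun y _ => by simp only [hadef]; positivity)
    (fun y _ => by simp only [hbdef]; positivity)
    (fun y _ => by simp only [hadef, hbdef, hqdef]; nlinarith [sq_nonneg ((U y).re*(V y).re + (U y).im*(V y).im)])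
    (fun y _ => by simp only [hadef, hbdef, hrdef]; nlinarith [sq_nonneg ((U y).re*(V y).im - (U y).im*(V y).re)])
    haM hbM hda hdb hdq hdr
  intro y hy
  obtain ⟨haz, hbz⟩ := main y hy
  simp only [hadef] at haz
  simp only [hbdef] at hbz
  constructor
  · have h1 : (U y).re = 0 := by nlinarith [sq_nonneg (U y).re, sq_nonneg (U y).im]
    have h2 : (U y).im = 0 := by nlinarith [sq_nonneg (U y).re, sq_nonneg (U y).im]
    exact Complex.ext (by simpa using h1) (by simpa using h2)
  · have h1 : (V y).re = 0 := by nlinarith [sq_nonneg (V y).re, sq_nonneg (V y).im]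
    have h2 : (V y).im = 0 := by nlinarith [sq_nonneg (V y).re, sq_nonneg (V y).im]
    exact Complex.ext (by simpa using h1) (by simpa using h2)
end

section
/- Let k and ℓ be nonnegative integers with p := k + ℓ − 1 ≥ 1. If (U, V) solves the self-similar system (S) on (−1,1), then the pair U₁(x,t) := (1−t)^(−1/(2p))·U(x/(1−t)), U₂(x,t) := (1−t)^(−1/(2p))·V(x/(1−t)) is a classical solution of the nonlinear Dirac system (D) on the open set Ω := {(x,t) ∈ ℝ² : t < 1 and |x| < 1 − t}. -/
open Set Complex Filter Topology

/-- `R = conj(U₁) U₂ + conj(U₂) U₁` for functions of `(x, t) ∈ ℝ²`. -/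
noncomputable def RD (U₁ U₂ : ℝ × ℝ → ℂ) (z : ℝ × ℝ) : ℂ :=
  (starRingEnd ℂ) (U₁ z) * U₂ z + (starRingEnd ℂ) (U₂ z) * U₁ z

/-- `F = ℓ (|U₁|² + |U₂|²)^k R^{ℓ-1}` (equal to `0` when `ℓ = 0`). -/
noncomputable def FD (k l : ℕ) (U₁ U₂ : ℝ × ℝ → ℂ) (z : ℝ × ℝ) : ℂ :=
  (l : ℂ) * ((‖U₁ z‖ ^ 2 + ‖U₂ z‖ ^ 2 : ℝ) : ℂ) ^ k *
    (RD U₁ U₂ z) ^ (l - 1)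

/-- `G = k (|U₁|² + |U₂|²)^{k-1} R^ℓ` (equal to `0` when `k = 0`). -/
noncomputable def GD (k l : ℕ) (U₁ U₂ : ℝ × ℝ → ℂ) (z : ℝ × ℝ) : ℂ :=
  (k : ℂ) * ((‖U₁ z‖ ^ 2 + ‖U₂ z‖ ^ 2 : ℝ) : ℂ) ^ (k - 1) *
    (RD U₁ U₂ z) ^ l

/-- `(U₁, U₂)` is a classical solution of the massless nonlinear Dirac system (D)
on the open set `Ω ⊆ ℝ²` of variables `(x, t)`: both functions are differentiable
on `Ω` and `i(∂ₜU₁ + ∂ₓU₁) = F U₂ + G U₁`, `i(∂ₜU₂ - ∂ₓU₂) = F U₁ + G U₂` hold there,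
where `∂ₓ` (resp. `∂ₜ`) is the directional derivative along `(1,0)` (resp. `(0,1)`). -/
def SolvesD (k l : ℕ) (U₁ U₂ : ℝ × ℝ → ℂ) (Ω : Set (ℝ × ℝ)) : Prop :=
  ∀ z ∈ Ω, DifferentiableAt ℝ U₁ z ∧ DifferentiableAt ℝ U₂ z ∧
    Complex.I * (fderiv ℝ U₁ z (0, 1) + fderiv ℝ U₁ z (1, 0))
      = FD k l U₁ U₂ z * U₂ z + GD k l U₁ U₂ z * U₁ z ∧
    Complex.I * (fderiv ℝ U₂ z (0, 1) - fderiv ℝ U₂ z (1, 0))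
      = FD k l U₁ U₂ z * U₁ z + GD k l U₁ U₂ z * U₂ z


lemma key_hasFDeriv (c : ℝ) (W : ℝ → ℂ) (z : ℝ × ℝ) (hs : 0 < 1 - z.2)
    (hW : DifferentiableAt ℝ W (z.1 / (1 - z.2))) :
    DifferentiableAt ℝ (fun w : ℝ × ℝ => (((1 - w.2) ^ c : ℝ) : ℂ) * W (w.1 / (1 - w.2))) z ∧
    fderiv ℝ (fun w : ℝ × ℝ => (((1 - w.2) ^ c : ℝ) : ℂ) * W (w.1 / (1 - w.2))) z (1, 0)
      = (((1 - z.2) ^ c : ℝ) : ℂ) * (((1 - z.2)⁻¹ : ℝ) : ℂ) * deriv W (z.1 / (1 - z.2)) ∧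
    fderiv ℝ (fun w : ℝ × ℝ => (((1 - w.2) ^ c : ℝ) : ℂ) * W (w.1 / (1 - w.2))) z (0, 1)
      = (((1 - z.2) ^ c : ℝ) : ℂ) * ((z.1 / (1 - z.2) ^ 2 : ℝ) : ℂ) * deriv W (z.1 / (1 - z.2))
        + ((-(c * (1 - z.2) ^ (c - 1)) : ℝ) : ℂ) * W (z.1 / (1 - z.2)) := by
  have h2 : HasFDerivAt (fun w : ℝ × ℝ => 1 - w.2)
      (-(ContinuousLinearMap.snd ℝ ℝ ℝ)) z := by
    simpa using (hasFDerivAt_snd (𝕜 := ℝ) (E := ℝ) (F := ℝ) (p := z)).const_sub 1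
  have hA : HasFDerivAt (fun w : ℝ × ℝ => (1 - w.2) ^ c)
      ((c * (1 - z.2) ^ (c - 1)) • (-(ContinuousLinearMap.snd ℝ ℝ ℝ))) z :=
    by have := (Real.hasDerivAt_rpow_const (x := 1 - z.2) (p := c) (Or.inl hs.ne')).comp_hasFDerivAt z h2; exact this
  have hAc : HasFDerivAt (fun w : ℝ × ℝ => (((1 - w.2) ^ c : ℝ) : ℂ))
      (Complex.ofRealCLM.comp
        ((c * (1 - z.2) ^ (c - 1)) • (-(ContinuousLinearMap.snd ℝ ℝ ℝ)))) z :=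
    Complex.ofRealCLM.hasFDerivAt.comp z hA
  have hinv : HasFDerivAt (fun w : ℝ × ℝ => (1 - w.2)⁻¹)
      ((-((1 - z.2) ^ 2)⁻¹) • (-(ContinuousLinearMap.snd ℝ ℝ ℝ))) z :=
    (hasDerivAt_inv hs.ne').comp_hasFDerivAt z h2
  have hY : HasFDerivAt (fun w : ℝ × ℝ => w.1 / (1 - w.2))
      (z.1 • ((-((1 - z.2) ^ 2)⁻¹) • (-(ContinuousLinearMap.snd ℝ ℝ ℝ)))
        + (1 - z.2)⁻¹ • (ContinuousLinearMap.fst ℝ ℝ ℝ)) z := by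
    have := (hasFDerivAt_fst (𝕜 := ℝ) (E := ℝ) (F := ℝ) (p := z)).mul hinv
    convert this using 1 <;> ext <;> simp [div_eq_mul_inv]
  have hWY : HasFDerivAt (fun w : ℝ × ℝ => W (w.1 / (1 - w.2)))
      ((ContinuousLinearMap.smulRight (1 : ℝ →L[ℝ] ℝ) (deriv W (z.1 / (1 - z.2)))).comp
        (z.1 • ((-((1 - z.2) ^ 2)⁻¹) • (-(ContinuousLinearMap.snd ℝ ℝ ℝ)))
          + (1 - z.2)⁻¹ • (ContinuousLinearMap.fst ℝ ℝ ℝ))) z :=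
    (hW.hasDerivAt.hasFDerivAt).comp z hY
  have hmul : HasFDerivAt (fun w : ℝ × ℝ => (((1 - w.2) ^ c : ℝ) : ℂ) * W (w.1 / (1 - w.2))) _ z :=
    hAc.mul hWY
  refine ⟨hmul.differentiableAt, ?_, ?_⟩ <;> rw [hmul.fderiv] <;>
    · simp [ContinuousLinearMap.smul_apply, Complex.real_smul]
      push_cast
      ring

lemma FD_scale (k l : ℕ) (U V : ℝ → ℂ) (a : ℝ) (ha : 0 < a) (y : ℝ) :
    (l : ℂ) * ((‖(a : ℂ) * U y‖ ^ 2 + ‖(a : ℂ) * V y‖ ^ 2 : ℝ) : ℂ) ^ k *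
      ((starRingEnd ℂ) ((a : ℂ) * U y) * ((a : ℂ) * V y)
        + (starRingEnd ℂ) ((a : ℂ) * V y) * ((a : ℂ) * U y)) ^ (l - 1)
    = (a : ℂ) ^ (2 * (k + l - 1)) * Ffun k l U V y := by
  simp only [Ffun, Rfun]
  rcases l with _ | m
  · simp
  · have h1 : k + (m + 1) - 1 = k + m := by omega
    have h2 : (m + 1) - 1 = m := rfl
    rw [h1, h2]
    have habs : (‖(a : ℂ) * U y‖ ^ 2 + ‖(a : ℂ) * V y‖ ^ 2 : ℝ)
        = a ^ 2 * (‖U y‖ ^ 2 + ‖V y‖ ^ 2) := by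
      simp only [norm_mul, Complex.norm_real, Real.norm_eq_abs, abs_of_pos ha]; ring
    have hR : (starRingEnd ℂ) ((a : ℂ) * U y) * ((a : ℂ) * V y)
        + (starRingEnd ℂ) ((a : ℂ) * V y) * ((a : ℂ) * U y)
        = (a : ℂ) ^ 2 * (U y * (starRingEnd ℂ) (V y) + (starRingEnd ℂ) (U y) * V y) := by
      simp only [map_mul, Complex.conj_ofReal]; ring
    rw [habs, hR]
    push_cast
    rw [mul_pow, mul_pow, ← pow_mul, ← pow_mul,
      show 2 * (k + m) = 2 * k + 2 * m from by ring, pow_add]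
    ring

lemma GD_scale (k l : ℕ) (U V : ℝ → ℂ) (a : ℝ) (ha : 0 < a) (y : ℝ) :
    (k : ℂ) * ((‖(a : ℂ) * U y‖ ^ 2 + ‖(a : ℂ) * V y‖ ^ 2 : ℝ) : ℂ) ^ (k - 1) *
      ((starRingEnd ℂ) ((a : ℂ) * U y) * ((a : ℂ) * V y)
        + (starRingEnd ℂ) ((a : ℂ) * V y) * ((a : ℂ) * U y)) ^ l
    = (a : ℂ) ^ (2 * (k + l - 1)) * Gfun k l U V y := by
  simp only [Gfun, Rfun]
  rcases k with _ | n
  · simp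
  · have h1 : n + 1 + l - 1 = n + l := by omega
    have h2 : (n + 1) - 1 = n := rfl
    rw [h1, h2]
    have habs : (‖(a : ℂ) * U y‖ ^ 2 + ‖(a : ℂ) * V y‖ ^ 2 : ℝ)
        = a ^ 2 * (‖U y‖ ^ 2 + ‖V y‖ ^ 2) := by
      simp only [norm_mul, Complex.norm_real, Real.norm_eq_abs, abs_of_pos ha]; ring
    have hR : (starRingEnd ℂ) ((a : ℂ) * U y) * ((a : ℂ) * V y)
        + (starRingEnd ℂ) ((a : ℂ) * V y) * ((a : ℂ) * U y)
        = (a : ℂ) ^ 2 * (U y * (starRingEnd ℂ) (V y) + (starRingEnd ℂ) (U y) * V y) := by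
      simp only [map_mul, Complex.conj_ofReal]; ring
    rw [habs, hR]
    push_cast
    rw [mul_pow, mul_pow, ← pow_mul, ← pow_mul,
      show 2 * (n + l) = 2 * n + 2 * l from by ring, pow_add]
    ring

/-- a solution `(U, V)` of the self-similar system (S) on `(-1,1)`
produces a classical solution
`U₁(x,t) = (1-t)^{-1/(2p)} U(x/(1-t))`, `U₂(x,t) = (1-t)^{-1/(2p)} V(x/(1-t))`
of the nonlinear Dirac system (D) on `Ω = {(x,t) : t < 1, |x| < 1 - t}`. -/
theorem selfsimilar_gives_dirac_solution (k l : ℕ) (hp : 1 ≤ k + l - 1) (U V : ℝ → ℂ)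
    (hS : SolvesS k l U V (Ioo (-1 : ℝ) 1)) :
    SolvesD k l
      (fun z => (((1 - z.2) ^ (-(1 / (2 * ((k + l - 1 : ℕ) : ℝ)))) : ℝ) : ℂ) * U (z.1 / (1 - z.2)))
      (fun z => (((1 - z.2) ^ (-(1 / (2 * ((k + l - 1 : ℕ) : ℝ)))) : ℝ) : ℂ) * V (z.1 / (1 - z.2)))
      {z : ℝ × ℝ | z.2 < 1 ∧ |z.1| < 1 - z.2} := by
  intro z hz
  simp only [Set.mem_setOf_eq] at hz
  have hs : 0 < 1 - z.2 := lt_of_le_of_lt (abs_nonneg z.1) hz.2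
  have hy : z.1 / (1 - z.2) ∈ Ioo (-1 : ℝ) 1 := by
    have h1 := (abs_lt.mp hz.2).1
    have h2 := (abs_lt.mp hz.2).2
    constructor
    · rw [lt_div_iff₀ hs]; linarith
    · rw [div_lt_one hs]; linarith
  obtain ⟨hCU, hCV, hEq⟩ := hS
  have hUd : DifferentiableAt ℝ U (z.1 / (1 - z.2)) :=
    (hCU.contDiffAt (isOpen_Ioo.mem_nhds hy)).differentiableAt one_ne_zero
  have hVd : DifferentiableAt ℝ V (z.1 / (1 - z.2)) :=
    (hCV.contDiffAt (isOpen_Ioo.mem_nhds hy)).differentiableAt one_ne_zero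
  set c := -(1 / (2 * ((k + l - 1 : ℕ) : ℝ))) with hc
  obtain ⟨hdU, hdU1, hdU2⟩ := key_hasFDeriv c U z hs hUd
  obtain ⟨hdV, hdV1, hdV2⟩ := key_hasFDeriv c V z hs hVd
  obtain ⟨eq1, eq2⟩ := hEq (z.1 / (1 - z.2)) hy
  have hApos : 0 < (1 - z.2) ^ c := Real.rpow_pos_of_pos hs c
  have hpR : (1 : ℝ) ≤ ((k + l - 1 : ℕ) : ℝ) := by exact_mod_cast hp
  have hne : ((k + l - 1 : ℕ) : ℝ) ≠ 0 := by linarith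
  have r2 : (1 - z.2) ^ c * (1 - z.2)⁻¹ = (1 - z.2) ^ (c - 1) := by
    rw [show c - 1 = c + (-1) from by ring, Real.rpow_add hs, Real.rpow_neg_one]
  have r1 : (1 - z.2) ^ c * (z.1 / (1 - z.2) ^ 2) = (1 - z.2) ^ (c - 1) * (z.1 / (1 - z.2)) := by
    have hss : z.1 / (1 - z.2) ^ 2 = (1 - z.2)⁻¹ * (z.1 / (1 - z.2)) := by
      rw [pow_two, ← div_div, div_eq_inv_mul]
    rw [← r2, hss]; ring
  have r3 : -(c * (1 - z.2) ^ (c - 1)) = (1 - z.2) ^ (c - 1) * (1 / (2 * ((k + l - 1 : ℕ) : ℝ))) := by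
    rw [hc]; ring
  have r4 : (1 - z.2) ^ (c - 1) = ((1 - z.2) ^ c) ^ (2 * (k + l - 1) + 1) := by
    rw [← Real.rpow_natCast ((1 - z.2) ^ c) (2 * (k + l - 1) + 1), ← Real.rpow_mul hs.le]
    congr 1
    rw [hc]; push_cast; field_simp; ring
  have c1 : (((1 - z.2) ^ c : ℝ) : ℂ) * ((z.1 / (1 - z.2) ^ 2 : ℝ) : ℂ)
      = (((1 - z.2) ^ (c - 1) : ℝ) : ℂ) * ((z.1 / (1 - z.2) : ℝ) : ℂ) := by
    exact_mod_cast congrArg Complex.ofReal r1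
  have c2 : (((1 - z.2) ^ c : ℝ) : ℂ) * (((1 - z.2)⁻¹ : ℝ) : ℂ)
      = (((1 - z.2) ^ (c - 1) : ℝ) : ℂ) := by
    exact_mod_cast congrArg Complex.ofReal r2
  have c3 : ((-(c * (1 - z.2) ^ (c - 1)) : ℝ) : ℂ)
      = (((1 - z.2) ^ (c - 1) : ℝ) : ℂ) * (1 / (2 * ((k + l - 1 : ℕ) : ℂ))) := by
    have h := congrArg Complex.ofReal r3
    push_cast at h ⊢
    exact h
  have c4 : (((1 - z.2) ^ (c - 1) : ℝ) : ℂ)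
      = (((1 - z.2) ^ c : ℝ) : ℂ) ^ (2 * (k + l - 1) + 1) := by
    exact_mod_cast congrArg Complex.ofReal r4
  refine ⟨hdU, hdV, ?_, ?_⟩
  · rw [hdU2, hdU1]
    simp only [FD, RD, GD]
    rw [FD_scale k l U V _ hApos (z.1 / (1 - z.2)), GD_scale k l U V _ hApos (z.1 / (1 - z.2))]
    linear_combination Complex.I * deriv U (z.1 / (1 - z.2)) * c1
      + Complex.I * deriv U (z.1 / (1 - z.2)) * c2
      + Complex.I * U (z.1 / (1 - z.2)) * c3
      + (((1 - z.2) ^ (c - 1) : ℝ) : ℂ) * eq1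
      + (Ffun k l U V (z.1 / (1 - z.2)) * V (z.1 / (1 - z.2))
          + Gfun k l U V (z.1 / (1 - z.2)) * U (z.1 / (1 - z.2))) * c4
  · rw [hdV2, hdV1]
    simp only [FD, RD, GD]
    rw [FD_scale k l U V _ hApos (z.1 / (1 - z.2)), GD_scale k l U V _ hApos (z.1 / (1 - z.2))]
    linear_combination Complex.I * deriv V (z.1 / (1 - z.2)) * c1
      - Complex.I * deriv V (z.1 / (1 - z.2)) * c2
      + Complex.I * V (z.1 / (1 - z.2)) * c3
      + (((1 - z.2) ^ (c - 1) : ℝ) : ℂ) * eq2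
      + (Ffun k l U V (z.1 / (1 - z.2)) * U (z.1 / (1 - z.2))
          + Gfun k l U V (z.1 / (1 - z.2)) * V (z.1 / (1 - z.2))) * c4
end

section
/- Let k ≥ 2 be an integer and ℓ = 0, so that p := k − 1 ≥ 1. If (U, V) solves the self-similar system (S) on (−1,1), then the functions y ↦ (1+y)^(1/p)·|U(y)|² and y ↦ (1−y)^(1/p)·|V(y)|² are constant on (−1,1). -/
open Set Complex Filter Topology

lemma sqAbs_hasDerivAt {U : ℝ → ℂ} {u : ℂ} {y : ℝ} (hU : HasDerivAt U u y) :
    HasDerivAt (fun t => (‖U t‖ : ℝ) ^ 2)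
      (2 * (((starRingEnd ℂ) (U y)) * u).re) y := by
  have hre : HasDerivAt (fun t => (U t).re) (u.re) y :=
    Complex.reCLM.hasFDerivAt.comp_hasDerivAt y hU
  have him : HasDerivAt (fun t => (U t).im) (u.im) y :=
    Complex.imCLM.hasFDerivAt.comp_hasDerivAt y hU
  have h := (hre.mul hre).add (him.mul him)
  have heq : (fun t => (‖U t‖ : ℝ) ^ 2)
      = fun t => (U t).re * (U t).re + (U t).im * (U t).im := by
    funext t; rw [Complex.sq_norm, Complex.normSq_apply]
  rw [heq]
  convert (show HasDerivAt (fun t => (U t).re * (U t).re + (U t).im * (U t).im) _ y from h) using 1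
  simp [Complex.mul_re]
  ring

lemma const_of_hasDerivAt_zero {f : ℝ → ℝ} {a b : ℝ}
    (h : ∀ y ∈ Ioo a b, HasDerivAt f 0 y) :
    ∀ y ∈ Ioo a b, ∀ z ∈ Ioo a b, f y = f z := by
  intro y hy z hz
  refine (convex_Ioo a b).is_const_of_fderivWithin_eq_zero
    (fun x hx => ((h x hx).differentiableAt).differentiableWithinAt) (fun x hx => ?_) hy hz
  rw [fderivWithin_of_isOpen isOpen_Ioo hx, (h x hx).hasFDerivAt.fderiv]
  ext
  simp

lemma keyU (k : ℕ) (hk : 2 ≤ k) (U V : ℝ → ℂ) (y : ℝ) (u : ℂ)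
    (hEq : Complex.I * ((↑y + 1) * u + (1 / (2 * ((k + 0 - 1 : ℕ) : ℂ))) * U y)
      = Ffun k 0 U V y * V y + Gfun k 0 U V y * U y) :
    2 * ((k - 1 : ℕ) : ℝ) * (y + 1) * (((starRingEnd ℂ) (U y)) * u).re
      + ‖U y‖ ^ 2 = 0 := by
  have hF : Ffun k 0 U V y = 0 := by simp [Ffun]
  have hG : ∃ g : ℝ, Gfun k 0 U V y = (g : ℂ) := by
    refine ⟨(k : ℝ) * (‖U y‖ ^ 2 + ‖V y‖ ^ 2) ^ (k - 1), ?_⟩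
    simp only [Gfun, pow_zero, mul_one]
    push_cast
    ring
  obtain ⟨g, hG⟩ := hG
  rw [hF, hG, zero_mul, zero_add] at hEq
  have hkp : k + 0 - 1 = k - 1 := by omega
  rw [hkp] at hEq
  set p : ℕ := k - 1 with hp
  have hp1 : p ≠ 0 := by omega
  have hpne : ((p : ℂ)) ≠ 0 := Nat.cast_ne_zero.mpr hp1
  have hEq2 : Complex.I * ((2 * (p:ℂ)) * ((↑y + 1) * u) + U y)
      = (2 * (p:ℂ)) * ((g:ℂ) * U y) := by
    have h := congrArg (fun z => (2 * (p:ℂ)) * z) hEq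
    field_simp at h ⊢
    linear_combination h
  have him := congrArg (fun z => (z * (starRingEnd ℂ) (U y)).im) hEq2
  simp only [Complex.mul_im, Complex.mul_re, Complex.add_re, Complex.add_im,
    Complex.I_re, Complex.I_im, Complex.ofReal_re, Complex.ofReal_im,
    Complex.natCast_re, Complex.natCast_im, Complex.conj_re, Complex.conj_im,
    Complex.one_re, Complex.one_im, Complex.re_ofNat, Complex.im_ofNat] at him
  rw [Complex.sq_norm, Complex.normSq_apply]
  simp only [Complex.mul_re, Complex.conj_re, Complex.conj_im]
  nlinarith [him]

lemma keyV (k : ℕ) (hk : 2 ≤ k) (U V : ℝ → ℂ) (y : ℝ) (v : ℂ)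
    (hEq : Complex.I * ((↑y - 1) * v + (1 / (2 * ((k + 0 - 1 : ℕ) : ℂ))) * V y)
      = Ffun k 0 U V y * U y + Gfun k 0 U V y * V y) :
    2 * ((k - 1 : ℕ) : ℝ) * (y - 1) * (((starRingEnd ℂ) (V y)) * v).re
      + ‖V y‖ ^ 2 = 0 := by
  have hF : Ffun k 0 U V y = 0 := by simp [Ffun]
  have hG : ∃ g : ℝ, Gfun k 0 U V y = (g : ℂ) := by
    refine ⟨(k : ℝ) * (‖U y‖ ^ 2 + ‖V y‖ ^ 2) ^ (k - 1), ?_⟩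
    simp only [Gfun, pow_zero, mul_one]
    push_cast
    ring
  obtain ⟨g, hG⟩ := hG
  rw [hF, hG, zero_mul, zero_add] at hEq
  have hkp : k + 0 - 1 = k - 1 := by omega
  rw [hkp] at hEq
  set p : ℕ := k - 1 with hp
  have hp1 : p ≠ 0 := by omega
  have hpne : ((p : ℂ)) ≠ 0 := Nat.cast_ne_zero.mpr hp1
  have hEq2 : Complex.I * ((2 * (p:ℂ)) * ((↑y - 1) * v) + V y)
      = (2 * (p:ℂ)) * ((g:ℂ) * V y) := by
    have h := congrArg (fun z => (2 * (p:ℂ)) * z) hEq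
    field_simp at h ⊢
    linear_combination h
  have him := congrArg (fun z => (z * (starRingEnd ℂ) (V y)).im) hEq2
  simp only [Complex.mul_im, Complex.mul_re, Complex.add_re, Complex.add_im,
    Complex.sub_re, Complex.sub_im,
    Complex.I_re, Complex.I_im, Complex.ofReal_re, Complex.ofReal_im,
    Complex.natCast_re, Complex.natCast_im, Complex.conj_re, Complex.conj_im,
    Complex.one_re, Complex.one_im, Complex.re_ofNat, Complex.im_ofNat] at him
  rw [Complex.sq_norm, Complex.normSq_apply]
  simp only [Complex.mul_re, Complex.conj_re, Complex.conj_im]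
  nlinarith [him]

/-- for `ℓ = 0` and `k ≥ 2` (so `p = k - 1 ≥ 1`), the quantities
`(1+y)^{1/p} |U(y)|²` and `(1-y)^{1/p} |V(y)|²` are constant on `(-1,1)`. -/
theorem ell_zero_moduli_constant (k : ℕ) (hk : 2 ≤ k) (U V : ℝ → ℂ)
    (hS : SolvesS k 0 U V (Ioo (-1 : ℝ) 1)) :
    ∀ y ∈ Ioo (-1 : ℝ) 1, ∀ z ∈ Ioo (-1 : ℝ) 1,
      (1 + y) ^ (1 / ((k - 1 : ℕ) : ℝ)) * ‖U y‖ ^ 2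
        = (1 + z) ^ (1 / ((k - 1 : ℕ) : ℝ)) * ‖U z‖ ^ 2 ∧
      (1 - y) ^ (1 / ((k - 1 : ℕ) : ℝ)) * ‖V y‖ ^ 2
        = (1 - z) ^ (1 / ((k - 1 : ℕ) : ℝ)) * ‖V z‖ ^ 2 := by
  obtain ⟨hU, hV, hODE⟩ := hS
  have hp0 : (0:ℝ) < ((k - 1 : ℕ) : ℝ) := by
    exact_mod_cast Nat.pos_of_ne_zero (by omega)
  -- the U-quantity
  have hUconst : ∀ y ∈ Ioo (-1:ℝ) 1, ∀ z ∈ Ioo (-1:ℝ) 1,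
      (1 + y) ^ (1 / ((k - 1 : ℕ) : ℝ)) * ‖U y‖ ^ 2 = (1 + z) ^ (1 / ((k - 1 : ℕ) : ℝ)) * ‖U z‖ ^ 2 := by
    apply const_of_hasDerivAt_zero
    intro y hy
    have h1y : (0:ℝ) < 1 + y := by have := hy.1; linarith
    have hdU : HasDerivAt U (deriv U y) y :=
      ((hU.differentiableOn one_ne_zero).differentiableAt (isOpen_Ioo.mem_nhds hy)).hasDerivAt
    have hn := sqAbs_hasDerivAt hdU
    have hrel := keyU k hk U V y (deriv U y) (hODE y hy).1
    have hP0 : ((k - 1 : ℕ) : ℝ) ≠ 0 := hp0.ne'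
    set P : ℝ := ((k - 1 : ℕ) : ℝ) with hPdef
    set R : ℝ := (((starRingEnd ℂ) (U y)) * deriv U y).re with hRdef
    set A : ℝ := ‖U y‖ ^ 2 with hAdef
    have hr : HasDerivAt (fun t : ℝ => (1 + t) ^ (1 / P)) (1 / P * (1 + y) ^ (1 / P - 1) * 1) y :=
      (Real.hasDerivAt_rpow_const (Or.inl h1y.ne')).comp y ((hasDerivAt_id y).const_add 1)
    have hmul := hr.mul hn
    have hzero : 1 / P * (1 + y) ^ (1 / P - 1) * 1 * A + (1 + y) ^ (1 / P) * (2 * R) = 0 := by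
      rw [Real.rpow_sub_one h1y.ne']
      field_simp
      linear_combination ((1 + y) ^ (1 / P)) * hrel
    rw [hzero] at hmul
    exact hmul
  -- the V-quantity
  have hVconst : ∀ y ∈ Ioo (-1:ℝ) 1, ∀ z ∈ Ioo (-1:ℝ) 1,
      (1 - y) ^ (1 / ((k - 1 : ℕ) : ℝ)) * ‖V y‖ ^ 2 = (1 - z) ^ (1 / ((k - 1 : ℕ) : ℝ)) * ‖V z‖ ^ 2 := by
    apply const_of_hasDerivAt_zero
    intro y hy
    have h1y : (0:ℝ) < 1 - y := by have := hy.2; linarith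
    have hdV : HasDerivAt V (deriv V y) y :=
      ((hV.differentiableOn one_ne_zero).differentiableAt (isOpen_Ioo.mem_nhds hy)).hasDerivAt
    have hn := sqAbs_hasDerivAt hdV
    have hrel := keyV k hk U V y (deriv V y) (hODE y hy).2
    have hP0 : ((k - 1 : ℕ) : ℝ) ≠ 0 := hp0.ne'
    set P : ℝ := ((k - 1 : ℕ) : ℝ) with hPdef
    set R : ℝ := (((starRingEnd ℂ) (V y)) * deriv V y).re with hRdef
    set A : ℝ := ‖V y‖ ^ 2 with hAdef
    have hr : HasDerivAt (fun t : ℝ => (1 - t) ^ (1 / P)) (1 / P * (1 - y) ^ (1 / P - 1) * (-1)) y :=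
      (Real.hasDerivAt_rpow_const (Or.inl h1y.ne')).comp y ((hasDerivAt_id y).const_sub 1)
    have hmul := hr.mul hn
    have hzero : 1 / P * (1 - y) ^ (1 / P - 1) * (-1) * A + (1 - y) ^ (1 / P) * (2 * R) = 0 := by
      rw [Real.rpow_sub_one h1y.ne']
      field_simp
      linear_combination (-((1 - y) ^ (1 / P))) * hrel
    rw [hzero] at hmul
    exact hmul
  intro y hy z hz
  exact ⟨hUconst y hy z hz, hVconst y hy z hz⟩
end

section
/- Let k be a nonnegative integer and ℓ an odd positive integer with p := k + ℓ − 1 ≥ 1. Suppose (U, V) solves the self-similar system (S) on (−1,1) and J ⊆ (−1,1) is an open subinterval on which U(y) ≠ 0 and V(y) ≠ 0 for all y ∈ J. Then the function y ↦ Im(conj(U(y))·V(y)) / (|U(y)|·|V(y)|) is nondecreasing on J. -/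
open Set Complex Filter Topology

lemma aux_nonneg (a1 a2 b1 b2 d1 d2 e1 e2 F G c y : ℝ)
    (hy1 : 0 < y + 1) (hy2 : 0 < 1 - y)
    (hu : 0 < a1^2 + a2^2) (hv : 0 < b1^2 + b2^2)
    (hF : 0 ≤ F) (hGC : 0 ≤ G * (a1*b1 + a2*b2))
    (h1 : (y+1) * d1 + c * a1 = F * b2 + G * a2)
    (h2 : (y+1) * d2 + c * a2 = -(F * b1) - G * a1)
    (h3 : (y-1) * e1 + c * b1 = F * a2 + G * b2)
    (h4 : (y-1) * e2 + c * b2 = -(F * a1) - G * b1) :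
    0 ≤ ((d1 * b2 + a1 * e2 - (d2 * b1 + a2 * e1)) *
          (Real.sqrt (a1^2+a2^2) * Real.sqrt (b1^2+b2^2))
        - (a1*b2 - a2*b1) *
          ((2*a1*d1 + 2*a2*d2) / (2 * Real.sqrt (a1^2+a2^2)) * Real.sqrt (b1^2+b2^2)
            + Real.sqrt (a1^2+a2^2) * ((2*b1*e1 + 2*b2*e2) / (2 * Real.sqrt (b1^2+b2^2)))))
      / (Real.sqrt (a1^2+a2^2) * Real.sqrt (b1^2+b2^2))^2 := by
  have hy1' : y + 1 ≠ 0 := ne_of_gt hy1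
  have hy2' : (1:ℝ) - y ≠ 0 := ne_of_gt hy2
  have hy3 : y - 1 ≠ 0 := by intro h; apply hy2'; linarith
  set s := Real.sqrt (a1^2+a2^2) with hs
  set t := Real.sqrt (b1^2+b2^2) with ht
  have hs2 : s^2 = a1^2+a2^2 := Real.sq_sqrt hu.le
  have ht2 : t^2 = b1^2+b2^2 := Real.sq_sqrt hv.le
  have hspos : 0 < s := Real.sqrt_pos.mpr hu
  have htpos : 0 < t := Real.sqrt_pos.mpr hv
  have hd1 : d1 = (F*b2 + G*a2 - c*a1)/(y+1) := by
    rw [eq_div_iff hy1']; linear_combination h1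
  have hd2 : d2 = (-(F*b1) - G*a1 - c*a2)/(y+1) := by
    rw [eq_div_iff hy1']; linear_combination h2
  have he1 : e1 = (F*a2 + G*b2 - c*b1)/(y-1) := by
    rw [eq_div_iff hy3]; linear_combination h3
  have he2 : e2 = (-(F*a1) - G*b1 - c*b2)/(y-1) := by
    rw [eq_div_iff hy3]; linear_combination h4
  have t1 : 0 ≤ F*(a1*b1+a2*b2)^2 + (G*(a1*b1+a2*b2))*(a1^2+a2^2) :=
    add_nonneg (mul_nonneg hF (sq_nonneg _)) (mul_nonneg hGC hu.le)
  have t2 : 0 ≤ F*(a1*b1+a2*b2)^2 + (G*(a1*b1+a2*b2))*(b1^2+b2^2) :=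
    add_nonneg (mul_nonneg hF (sq_nonneg _)) (mul_nonneg hGC hv.le)
  have hident : 2*(d1*b2 + a1*e2 - (d2*b1 + a2*e1))*(a1^2+a2^2)*(b1^2+b2^2)
        - (a1*b2 - a2*b1)*((2*a1*d1 + 2*a2*d2)*(b1^2+b2^2) + (2*b1*e1 + 2*b2*e2)*(a1^2+a2^2))
      = 2*(b1^2+b2^2)*(F*(a1*b1+a2*b2)^2 + (G*(a1*b1+a2*b2))*(a1^2+a2^2))/(y+1)
        + 2*(a1^2+a2^2)*(F*(a1*b1+a2*b2)^2 + (G*(a1*b1+a2*b2))*(b1^2+b2^2))/(1-y) := by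
    rw [hd1, hd2, he1, he2]
    field_simp
    ring
  have hN2 : 0 ≤ 2*(d1*b2 + a1*e2 - (d2*b1 + a2*e1))*(a1^2+a2^2)*(b1^2+b2^2)
        - (a1*b2 - a2*b1)*((2*a1*d1 + 2*a2*d2)*(b1^2+b2^2) + (2*b1*e1 + 2*b2*e2)*(a1^2+a2^2)) := by
    rw [hident]
    have g1 : 0 ≤ 2*(b1^2+b2^2)*(F*(a1*b1+a2*b2)^2 + (G*(a1*b1+a2*b2))*(a1^2+a2^2)) :=
      mul_nonneg (by positivity) t1
    have g2 : 0 ≤ 2*(a1^2+a2^2)*(F*(a1*b1+a2*b2)^2 + (G*(a1*b1+a2*b2))*(b1^2+b2^2)) :=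
      mul_nonneg (by positivity) t2
    exact add_nonneg (div_nonneg g1 hy1.le) (div_nonneg g2 hy2.le)
  have hXalt : (d1 * b2 + a1 * e2 - (d2 * b1 + a2 * e1)) * (s * t)
        - (a1*b2 - a2*b1) *
          ((2*a1*d1 + 2*a2*d2) / (2 * s) * t + s * ((2*b1*e1 + 2*b2*e2) / (2 * t)))
      = (2*(d1*b2 + a1*e2 - (d2*b1 + a2*e1))*s^2*t^2
          - (a1*b2 - a2*b1)*((2*a1*d1 + 2*a2*d2)*t^2 + (2*b1*e1 + 2*b2*e2)*s^2)) / (2*s*t) := by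
    field_simp
  apply div_nonneg _ (sq_nonneg _)
  rw [hXalt, hs2, ht2]
  exact div_nonneg hN2 (by positivity)

/-- for odd `ℓ`, the relative phase quantity
`Im(conj(U) V)/(|U| |V|)` is nondecreasing on any open subinterval of `(-1,1)`
where `U` and `V` do not vanish. -/
theorem sin_phase_monotone_odd (k l : ℕ) (hl : Odd l) (hlpos : 1 ≤ l)
    (hp : 1 ≤ k + l - 1) (U V : ℝ → ℂ)
    (hS : SolvesS k l U V (Ioo (-1 : ℝ) 1))
    (a b : ℝ) (hab : Ioo a b ⊆ Ioo (-1 : ℝ) 1)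
    (hU : ∀ y ∈ Ioo a b, U y ≠ 0) (hV : ∀ y ∈ Ioo a b, V y ≠ 0) :
    MonotoneOn
      (fun y => ((starRingEnd ℂ) (U y) * V y).im / (‖U y‖ * ‖V y‖))
      (Ioo a b) := by
  obtain ⟨hUreg, hVreg, heq⟩ := hS
  have key : ∀ y ∈ Ioo a b, ∃ q' : ℝ, 0 ≤ q' ∧
      HasDerivAt (fun y => ((starRingEnd ℂ) (U y) * V y).im /
        (‖U y‖ * ‖V y‖)) q' y := by
    intro y hy
    have hyJ : y ∈ Ioo (-1:ℝ) 1 := hab hy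
    have hUy := hU y hy
    have hVy := hV y hy
    have hy1 : (0:ℝ) < y + 1 := by have := hyJ.1; linarith
    have hy2 : (0:ℝ) < 1 - y := by have := hyJ.2; linarith
    have hdU : HasDerivAt U (deriv U y) y :=
      ((hUreg.differentiableOn one_ne_zero).differentiableAt (isOpen_Ioo.mem_nhds hyJ)).hasDerivAt
    have hdV : HasDerivAt V (deriv V y) y :=
      ((hVreg.differentiableOn one_ne_zero).differentiableAt (isOpen_Ioo.mem_nhds hyJ)).hasDerivAt
    have hu2 : (0:ℝ) < (U y).re^2 + (U y).im^2 := by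
      have h := Complex.normSq_pos.mpr hUy
      rw [Complex.normSq_apply] at h; nlinarith
    have hv2 : (0:ℝ) < (V y).re^2 + (V y).im^2 := by
      have h := Complex.normSq_pos.mpr hVy
      rw [Complex.normSq_apply] at h; nlinarith
    -- real forms of F, G
    set F0 : ℝ := (l:ℝ) * (‖U y‖^2 + ‖V y‖^2)^k *
        (2*((U y).re*(V y).re + (U y).im*(V y).im))^(l-1) with hF0def
    set G0 : ℝ := (k:ℝ) * (‖U y‖^2 + ‖V y‖^2)^(k-1) *
        (2*((U y).re*(V y).re + (U y).im*(V y).im))^l with hG0def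
    set c : ℝ := 1 / (2 * ((k + l - 1 : ℕ) : ℝ)) with hcdef
    have hRc : Rfun U V y = ((2*((U y).re*(V y).re + (U y).im*(V y).im) : ℝ) : ℂ) := by
      apply Complex.ext <;>
        simp [Rfun, Complex.mul_re, Complex.mul_im] <;> ring
    have hFc : Ffun k l U V y = ((F0 : ℝ) : ℂ) := by
      rw [hF0def]
      simp only [Ffun]
      rw [hRc]
      push_cast
      ring
    have hGc : Gfun k l U V y = ((G0 : ℝ) : ℂ) := by
      rw [hG0def]
      simp only [Gfun]
      rw [hRc]
      push_cast
      ring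
    have hcc : (1 / (2 * ((k + l - 1 : ℕ) : ℂ))) = ((c : ℝ) : ℂ) := by
      rw [hcdef]; push_cast; ring
    have hyc1 : ((y:ℂ) + 1) = (((y + 1 : ℝ)) : ℂ) := by push_cast; ring
    have hyc2 : ((y:ℂ) - 1) = (((y - 1 : ℝ)) : ℂ) := by push_cast; ring
    obtain ⟨heqU, heqV⟩ := heq y hyJ
    rw [hFc, hGc, hcc, hyc1] at heqU
    rw [hFc, hGc, hcc, hyc2] at heqV
    have hU1 := congrArg Complex.re heqU
    have hU2 := congrArg Complex.im heqU
    have hV1 := congrArg Complex.re heqV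
    have hV2 := congrArg Complex.im heqV
    simp only [Complex.add_re, Complex.add_im, Complex.mul_re, Complex.mul_im,
      Complex.I_re, Complex.I_im, Complex.ofReal_re, Complex.ofReal_im,
      zero_mul, one_mul, mul_zero, zero_sub, sub_zero, zero_add, add_zero,
      neg_neg, neg_mul, neg_add_rev] at hU1 hU2 hV1 hV2
    -- nonnegativity of F0 and G0 * C
    have hF0n : 0 ≤ F0 := by
      rw [hF0def]
      have hE : Even (l - 1) := by obtain ⟨m, hm⟩ := hl; exact ⟨m, by omega⟩
      exact mul_nonneg (mul_nonneg (Nat.cast_nonneg l) (pow_nonneg (by positivity) k))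
        (hE.pow_nonneg _)
    have hGC0 : 0 ≤ G0 * ((U y).re*(V y).re + (U y).im*(V y).im) := by
      obtain ⟨m, hm⟩ := hl
      have hE : Even (l + 1) := ⟨m + 1, by omega⟩
      have h2 : G0 * ((U y).re*(V y).re + (U y).im*(V y).im)
          = (k:ℝ) * (‖U y‖^2 + ‖V y‖^2)^(k-1) * 2^l *
            ((U y).re*(V y).re + (U y).im*(V y).im)^(l+1) := by
        rw [hG0def, mul_pow]; ring
      rw [h2]
      exact mul_nonneg (mul_nonneg (mul_nonneg (Nat.cast_nonneg k)
        (pow_nonneg (by positivity) _)) (by positivity)) (hE.pow_nonneg _)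
    -- derivative construction
    have hur : HasDerivAt (fun t => (U t).re) ((deriv U y).re) y := by
      exact Complex.reCLM.hasFDerivAt.comp_hasDerivAt y hdU
    have hui : HasDerivAt (fun t => (U t).im) ((deriv U y).im) y := by
      exact Complex.imCLM.hasFDerivAt.comp_hasDerivAt y hdU
    have hvr : HasDerivAt (fun t => (V t).re) ((deriv V y).re) y := by
      exact Complex.reCLM.hasFDerivAt.comp_hasDerivAt y hdV
    have hvi : HasDerivAt (fun t => (V t).im) ((deriv V y).im) y := by
      exact Complex.imCLM.hasFDerivAt.comp_hasDerivAt y hdV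
    have hSder : HasDerivAt (fun t => ((starRingEnd ℂ) (U t) * V t).im)
        ((deriv U y).re * (V y).im + (U y).re * (deriv V y).im
          - ((deriv U y).im * (V y).re + (U y).im * (deriv V y).re)) y := by
      have hfun : (fun t => ((starRingEnd ℂ) (U t) * V t).im)
          = fun t => (U t).re * (V t).im - (U t).im * (V t).re := by
        funext t
        simp only [Complex.mul_im, Complex.conj_re, Complex.conj_im]
        ring
      rw [hfun]
      exact (hur.mul hvi).sub (hui.mul hvr)
    have hsqU : HasDerivAt (fun t => Real.sqrt ((U t).re^2 + (U t).im^2))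
        ((2*(U y).re*(deriv U y).re + 2*(U y).im*(deriv U y).im) /
          (2 * Real.sqrt ((U y).re^2 + (U y).im^2))) y := by
      have h0 : HasDerivAt (fun t => (U t).re^2 + (U t).im^2)
          (2*(U y).re*(deriv U y).re + 2*(U y).im*(deriv U y).im) y := by
        have h1 := (hur.pow 2).add (hui.pow 2)
        refine h1.congr_deriv ?_
        push_cast
        ring
      exact h0.sqrt (ne_of_gt hu2)
    have hsqV : HasDerivAt (fun t => Real.sqrt ((V t).re^2 + (V t).im^2))
        ((2*(V y).re*(deriv V y).re + 2*(V y).im*(deriv V y).im) /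
          (2 * Real.sqrt ((V y).re^2 + (V y).im^2))) y := by
      have h0 : HasDerivAt (fun t => (V t).re^2 + (V t).im^2)
          (2*(V y).re*(deriv V y).re + 2*(V y).im*(deriv V y).im) y := by
        have h1 := (hvr.pow 2).add (hvi.pow 2)
        refine h1.congr_deriv ?_
        push_cast
        ring
      exact h0.sqrt (ne_of_gt hv2)
    have hdenpos : 0 < Real.sqrt ((U y).re^2 + (U y).im^2) * Real.sqrt ((V y).re^2 + (V y).im^2) :=
      mul_pos (Real.sqrt_pos.mpr hu2) (Real.sqrt_pos.mpr hv2)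
    have hQ0 := hSder.div (hsqU.mul hsqV) (ne_of_gt hdenpos)
    have hfunQ : (fun y => ((starRingEnd ℂ) (U y) * V y).im /
          (‖U y‖ * ‖V y‖))
        = fun t => ((starRingEnd ℂ) (U t) * V t).im /
          (Real.sqrt ((U t).re^2 + (U t).im^2) * Real.sqrt ((V t).re^2 + (V t).im^2)) := by
      funext t
      rw [show ‖U t‖ = Real.sqrt ((U t).re^2 + (U t).im^2) by
            rw [Complex.norm_def, Complex.normSq_apply]; ring_nf,
          show ‖V t‖ = Real.sqrt ((V t).re^2 + (V t).im^2) by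
            rw [Complex.norm_def, Complex.normSq_apply]; ring_nf]
    refine ⟨(((deriv U y).re * (V y).im + (U y).re * (deriv V y).im
          - ((deriv U y).im * (V y).re + (U y).im * (deriv V y).re)) *
          (Real.sqrt ((U y).re^2+(U y).im^2) * Real.sqrt ((V y).re^2+(V y).im^2))
        - ((U y).re*(V y).im - (U y).im*(V y).re) *
          ((2*(U y).re*(deriv U y).re + 2*(U y).im*(deriv U y).im) /
              (2 * Real.sqrt ((U y).re^2+(U y).im^2)) * Real.sqrt ((V y).re^2+(V y).im^2)
            + Real.sqrt ((U y).re^2+(U y).im^2) *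
              ((2*(V y).re*(deriv V y).re + 2*(V y).im*(deriv V y).im) /
                (2 * Real.sqrt ((V y).re^2+(V y).im^2)))))
      / (Real.sqrt ((U y).re^2+(U y).im^2) * Real.sqrt ((V y).re^2+(V y).im^2))^2, ?_, ?_⟩
    · exact aux_nonneg (U y).re (U y).im (V y).re (V y).im
        (deriv U y).re (deriv U y).im (deriv V y).re (deriv V y).im F0 G0 c y
        hy1 hy2 hu2 hv2 hF0n hGC0
        (by linear_combination hU2) (by linear_combination -hU1)
        (by linear_combination hV2) (by linear_combination -hV1)
    · rw [hfunQ]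
      refine hQ0.congr_deriv ?_
      simp only [Pi.mul_apply, Complex.mul_im, Complex.conj_re, Complex.conj_im]
      ring
  apply monotoneOn_of_deriv_nonneg (convex_Ioo a b)
  · intro y hy
    exact ((key y hy).choose_spec.2).differentiableAt.continuousAt.continuousWithinAt
  · rw [interior_Ioo]
    intro y hy
    exact ((key y hy).choose_spec.2).differentiableAt.differentiableWithinAt
  · rw [interior_Ioo]
    intro y hy
    obtain ⟨q', hq0, hqd⟩ := key y hy
    rw [hqd.deriv]
    exact hq0
end

section
/- Let k be a nonnegative integer and ℓ an odd positive integer with p := k + ℓ − 1 ≥ 1. If (U, V) solves the self-similar system (S) on (−1,1) and both U and V are bounded on (−1,1), then U and V are identically zero on (−1,1). -/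
open Set Complex Filter Topology

/- ### Auxiliary lemmas -/

private lemma unmul_I {A B : ℂ} (h : Complex.I * A = B) : A = -Complex.I * B := by
  have h2 : -Complex.I * B = A := by
    rw [← h, ← mul_assoc]; simp [Complex.I_mul_I]
  exact h2.symm

private lemma Rfun_eq_cast (U V : ℝ → ℂ) (y : ℝ) :
    Rfun U V y = ((2 * (U y * (starRingEnd ℂ) (V y)).re : ℝ) : ℂ) := by
  unfold Rfun
  rw [show (starRingEnd ℂ) (U y) * V y = (starRingEnd ℂ) (U y * (starRingEnd ℂ) (V y)) by
    rw [map_mul, Complex.conj_conj]]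
  rw [Complex.add_conj]

private lemma Ffun_eq_cast (k l : ℕ) (U V : ℝ → ℂ) (y : ℝ) :
    Ffun k l U V y = (((l : ℝ) * (‖U y‖ ^ 2 + ‖V y‖ ^ 2) ^ k *
      (2 * (U y * (starRingEnd ℂ) (V y)).re) ^ (l - 1) : ℝ) : ℂ) := by
  unfold Ffun; rw [Rfun_eq_cast]; push_cast; ring

private lemma Gfun_eq_cast (k l : ℕ) (U V : ℝ → ℂ) (y : ℝ) :
    Gfun k l U V y = (((k : ℝ) * (‖U y‖ ^ 2 + ‖V y‖ ^ 2) ^ (k - 1) *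
      (2 * (U y * (starRingEnd ℂ) (V y)).re) ^ l : ℝ) : ℂ) := by
  unfold Gfun; rw [Rfun_eq_cast]; push_cast; ring

private lemma alg_main (y c : ℝ) (u v u' v' Fc Gc : ℂ)
    (hF : Fc.im = 0) (hG : Gc.im = 0)
    (h1 : ((y:ℂ)+1)*u' = -Complex.I*(Fc*v+Gc*u) - (c:ℂ)*u)
    (h2 : ((y:ℂ)-1)*v' = -Complex.I*(Fc*u+Gc*v) - (c:ℂ)*v) :
    (1-y^2) * (u' * (starRingEnd ℂ) v + u * (starRingEnd ℂ) v').im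
      = 2*c*y*(u*(starRingEnd ℂ) v).im - 2*Gc.re*(u*(starRingEnd ℂ) v).re
        - Fc.re*((y+1)*Complex.normSq u + (1-y)*Complex.normSq v) := by
  have key : ((1-y^2 : ℝ):ℂ) * (u' * (starRingEnd ℂ) v + u * (starRingEnd ℂ) v')
      = -(((y:ℂ)-1)) * ((((y:ℂ)+1)*u') * (starRingEnd ℂ) v)
        - (((y:ℂ)+1)) * (u * (starRingEnd ℂ) ((((y:ℂ)-1))*v')) := by
    push_cast
    simp only [map_mul]
    rw [show (starRingEnd ℂ) ((y:ℂ)-1) = (y:ℂ)-1 by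
      simp [map_sub, Complex.conj_ofReal]]
    ring
  have h3 : (starRingEnd ℂ) ((((y:ℂ)-1))*v')
      = Complex.I*(Fc*(starRingEnd ℂ) u + Gc*(starRingEnd ℂ) v) - (c:ℂ)*(starRingEnd ℂ) v := by
    rw [h2]
    simp only [map_sub, map_mul, map_neg, map_add, Complex.conj_I, Complex.conj_ofReal]
    rw [show (starRingEnd ℂ) Fc = Fc from Complex.conj_eq_iff_im.2 hF,
        show (starRingEnd ℂ) Gc = Gc from Complex.conj_eq_iff_im.2 hG]
    ring
  have lhs_eq : (1-y^2) * (u' * (starRingEnd ℂ) v + u * (starRingEnd ℂ) v').im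
      = (((1-y^2 : ℝ):ℂ) * (u' * (starRingEnd ℂ) v + u * (starRingEnd ℂ) v')).im := by
    rw [Complex.mul_im]; simp [Complex.ofReal_re, Complex.ofReal_im, ← Complex.ofReal_pow]
  rw [lhs_eq, key, h1, h3]
  obtain ⟨f1, f2⟩ := Fc
  obtain ⟨g1, g2⟩ := Gc
  simp only [Complex.ext_iff] at hF hG ⊢
  simp only [Complex.normSq_apply] at *
  subst hF hG
  simp [Complex.mul_im, Complex.mul_re, Complex.add_im, Complex.add_re, Complex.sub_im,
    Complex.sub_re, Complex.I_re, Complex.I_im, Complex.ofReal_re, Complex.ofReal_im,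
    Complex.normSq_apply]
  ring

private lemma left_squeeze {Q B : ℝ → ℝ} (hA : AntitoneOn Q (Ioo (-1:ℝ) 1))
    (hQB : ∀ y ∈ Ioo (-1:ℝ) 1, Q y ≤ B y)
    (hB : Tendsto B (𝓝[>] (-1:ℝ)) (𝓝 0)) {y0 : ℝ} (hy0 : y0 ∈ Ioo (-1:ℝ) 1) :
    Q y0 ≤ 0 := by
  refine ge_of_tendsto hB ?_
  filter_upwards [Ioo_mem_nhdsGT_of_mem (show (-1:ℝ) ∈ Ico (-1:ℝ) y0 from ⟨le_rfl, hy0.1⟩)]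
    with y hy
  have hyJ : y ∈ Ioo (-1:ℝ) 1 := ⟨hy.1, hy.2.trans hy0.2⟩
  exact le_trans (hA hyJ hy0 hy.2.le) (hQB y hyJ)

private lemma right_squeeze_mono {Q B : ℝ → ℝ} (hM : MonotoneOn Q (Ioo (-1:ℝ) 1))
    (hQB : ∀ y ∈ Ioo (-1:ℝ) 1, Q y ≤ B y)
    (hB : Tendsto B (𝓝[<] (1:ℝ)) (𝓝 0)) {y0 : ℝ} (hy0 : y0 ∈ Ioo (-1:ℝ) 1) :
    Q y0 ≤ 0 := by
  refine ge_of_tendsto hB ?_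
  filter_upwards [Ioo_mem_nhdsLT_of_mem (show (1:ℝ) ∈ Ioc y0 (1:ℝ) from ⟨hy0.2, le_rfl⟩)]
    with y hy
  have hyJ : y ∈ Ioo (-1:ℝ) 1 := ⟨hy0.1.trans hy.1, hy.2⟩
  exact le_trans (hM hy0 hyJ hy.1.le) (hQB y hyJ)

private lemma right_squeeze_anti {Q B : ℝ → ℝ} (hA : AntitoneOn Q (Ioo (-1:ℝ) 1))
    (hBQ : ∀ y ∈ Ioo (-1:ℝ) 1, B y ≤ Q y)
    (hB : Tendsto B (𝓝[<] (1:ℝ)) (𝓝 0)) {y0 : ℝ} (hy0 : y0 ∈ Ioo (-1:ℝ) 1) :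
    0 ≤ Q y0 := by
  refine le_of_tendsto hB ?_
  filter_upwards [Ioo_mem_nhdsLT_of_mem (show (1:ℝ) ∈ Ioc y0 (1:ℝ) from ⟨hy0.2, le_rfl⟩)]
    with y hy
  have hyJ : y ∈ Ioo (-1:ℝ) 1 := ⟨hy0.1.trans hy.1, hy.2⟩
  exact le_trans (hBQ y hyJ) (hA hy0 hyJ hy.1.le)

private lemma tendsto_rpow_boundary_left (c : ℝ) (hc : 0 < c) (C : ℝ) :
    Tendsto (fun y : ℝ => (1 - y^2) ^ c * C) (𝓝[>] (-1:ℝ)) (𝓝 0) := by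
  have h1 : Tendsto (fun y : ℝ => 1 - y^2) (𝓝[>] (-1:ℝ)) (𝓝 0) := by
    have h0 : Tendsto (fun y : ℝ => 1 - y^2) (𝓝 (-1:ℝ)) (𝓝 (1 - (-1:ℝ)^2)) :=
      Continuous.tendsto (by continuity) (-1:ℝ)
    norm_num at h0
    exact h0.mono_left nhdsWithin_le_nhds
  have h2 : ContinuousAt (fun t : ℝ => t ^ c) 0 :=
    Real.continuousAt_rpow_const 0 c (Or.inr hc.le)
  have h3 := h2.tendsto.comp h1
  rw [Real.zero_rpow hc.ne'] at h3
  simpa using h3.mul_const C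

private lemma tendsto_rpow_boundary_right (c : ℝ) (hc : 0 < c) (C : ℝ) :
    Tendsto (fun y : ℝ => (1 - y^2) ^ c * C) (𝓝[<] (1:ℝ)) (𝓝 0) := by
  have h1 : Tendsto (fun y : ℝ => 1 - y^2) (𝓝[<] (1:ℝ)) (𝓝 0) := by
    have h0 : Tendsto (fun y : ℝ => 1 - y^2) (𝓝 (1:ℝ)) (𝓝 (1 - (1:ℝ)^2)) :=
      Continuous.tendsto (by continuity) (1:ℝ)
    norm_num at h0
    exact h0.mono_left nhdsWithin_le_nhds
  have h2 : ContinuousAt (fun t : ℝ => t ^ c) 0 :=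
    Real.continuousAt_rpow_const 0 c (Or.inr hc.le)
  have h3 := h2.tendsto.comp h1
  rw [Real.zero_rpow hc.ne'] at h3
  simpa using h3.mul_const C

set_option maxHeartbeats 1000000

/-- for odd `ℓ`, there are no nontrivial bounded self-similar
solutions on `(-1,1)`. -/
theorem no_bounded_selfsimilar_odd (k l : ℕ) (hl : Odd l) (hlpos : 1 ≤ l)
    (hp : 1 ≤ k + l - 1) (U V : ℝ → ℂ)
    (hS : SolvesS k l U V (Ioo (-1 : ℝ) 1))
    (hbU : ∃ M : ℝ, ∀ y ∈ Ioo (-1 : ℝ) 1, ‖U y‖ ≤ M)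
    (hbV : ∃ M : ℝ, ∀ y ∈ Ioo (-1 : ℝ) 1, ‖V y‖ ≤ M) :
    ∀ y ∈ Ioo (-1 : ℝ) 1, U y = 0 ∧ V y = 0 := by
  obtain ⟨hCU, hCV, hEq⟩ := hS
  obtain ⟨MU, hMU⟩ := hbU
  obtain ⟨MV, hMV⟩ := hbV
  obtain ⟨mm, hmm⟩ := hl
  set J : Set ℝ := Ioo (-1:ℝ) 1 with hJ
  set p : ℕ := k + l - 1 with hpdef
  have hppos : (0:ℝ) < (p:ℝ) := by exact_mod_cast hp
  set cR : ℝ := 1 / (2 * (p:ℝ)) with hcR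
  have hcpos : 0 < cR := by positivity
  have h2cp : 2 * cR * (p:ℝ) = 1 := by
    rw [hcR]; field_simp
  have hcast : (1 / (2 * ((k + l - 1 : ℕ) : ℂ))) = ((cR : ℝ) : ℂ) := by
    rw [hcR, ← hpdef]; push_cast; ring
  -- basic notations
  set a : ℝ → ℝ := fun y => (U y * (starRingEnd ℂ) (V y)).re with ha
  set ψ : ℝ → ℝ := fun y => (U y * (starRingEnd ℂ) (V y)).im with hψ
  set Sf : ℝ → ℝ := fun y => ‖U y‖ ^ 2 + ‖V y‖ ^ 2 with hSf
  set f : ℝ → ℝ := fun y => (l:ℝ) * (Sf y) ^ k * (2 * a y) ^ (l - 1) with hf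
  set g : ℝ → ℝ := fun y => (k:ℝ) * (Sf y) ^ (k - 1) * (2 * a y) ^ l with hg
  set W : ℝ → ℝ := fun y => (y + 1) * Complex.normSq (U y) + (1 - y) * Complex.normSq (V y)
    with hW
  have hFre : ∀ y, (Ffun k l U V y) = ((f y : ℝ) : ℂ) := fun y => Ffun_eq_cast k l U V y
  have hGre : ∀ y, (Gfun k l U V y) = ((g y : ℝ) : ℂ) := fun y => Gfun_eq_cast k l U V y
  -- differentiability
  have hdU : ∀ y ∈ J, HasDerivAt U (deriv U y) y := by
    intro y hy
    exact ((hCU.differentiableOn one_ne_zero).differentiableAt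
      (isOpen_Ioo.mem_nhds hy)).hasDerivAt
  have hdV : ∀ y ∈ J, HasDerivAt V (deriv V y) y := by
    intro y hy
    exact ((hCV.differentiableOn one_ne_zero).differentiableAt
      (isOpen_Ioo.mem_nhds hy)).hasDerivAt
  -- the ODEs in convenient form
  have h1 : ∀ y ∈ J, ((y:ℂ)+1) * deriv U y
      = -Complex.I*(Ffun k l U V y * V y + Gfun k l U V y * U y) - ((cR:ℝ):ℂ) * U y := by
    intro y hy
    have e := (hEq y hy).1
    rw [hcast] at e
    have := unmul_I e
    linear_combination this
  have h2 : ∀ y ∈ J, ((y:ℂ)-1) * deriv V y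
      = -Complex.I*(Ffun k l U V y * U y + Gfun k l U V y * V y) - ((cR:ℝ):ℂ) * V y := by
    intro y hy
    have e := (hEq y hy).2
    rw [hcast] at e
    have := unmul_I e
    linear_combination this
  -- derivative of ψ
  have hψd : ∀ y ∈ J, HasDerivAt ψ
      ((deriv U y * (starRingEnd ℂ) (V y) + U y * (starRingEnd ℂ) (deriv V y)).im) y := by
    intro y hy
    have hprod : HasDerivAt (fun z => U z * (starRingEnd ℂ) (V z))
        (deriv U y * (starRingEnd ℂ) (V y) + U y * (starRingEnd ℂ) (deriv V y)) y := by
      exact (hdU y hy).mul ((hdV y hy).star)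
    exact (Complex.imCLM.hasFDerivAt.comp_hasDerivAt y hprod)
  -- key identity
  have hkey : ∀ y ∈ J, (1 - y^2) *
      ((deriv U y * (starRingEnd ℂ) (V y) + U y * (starRingEnd ℂ) (deriv V y)).im)
      = 2*cR*y*ψ y - 2*(g y)*(a y) - f y * W y := by
    intro y hy
    have := alg_main y cR (U y) (V y) (deriv U y) (deriv V y)
      (Ffun k l U V y) (Gfun k l U V y)
      (by rw [hFre y]; simp) (by rw [hGre y]; simp)
      (by rw [h1 y hy]) (by rw [h2 y hy])
    rw [this, hFre y, hGre y]
    simp only [Complex.ofReal_re]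
    rfl
  -- sign facts
  have hSf0 : ∀ y, 0 ≤ Sf y := by intro y; rw [hSf]; positivity
  have hEvenl1 : Even (l - 1) := ⟨mm, by omega⟩
  have hEvenl2 : Even (l + 1) := ⟨mm + 1, by omega⟩
  have hf0 : ∀ y, 0 ≤ f y := by
    intro y
    apply mul_nonneg (mul_nonneg (by positivity) (pow_nonneg (hSf0 y) k))
    exact hEvenl1.pow_nonneg _
  have hga : ∀ y, 0 ≤ g y * a y := by
    intro y
    have : g y * a y = (k:ℝ) * (Sf y) ^ (k-1) * (2:ℝ)^l * (a y) ^ (l+1) := by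
      show ((k:ℝ) * Sf y ^ (k - 1) * (2 * a y) ^ l) * a y
        = (k:ℝ) * (Sf y) ^ (k-1) * (2:ℝ)^l * (a y) ^ (l+1)
      rw [mul_pow, pow_succ]
      ring
    rw [this]
    apply mul_nonneg (mul_nonneg (mul_nonneg (by positivity) (pow_nonneg (hSf0 y) _))
      (by positivity))
    exact hEvenl2.pow_nonneg _
  have hW0 : ∀ y ∈ J, 0 ≤ W y := by
    intro y hy
    have h1' : (0:ℝ) < y + 1 := by have := hy.1; linarith
    have h2' : (0:ℝ) < 1 - y := by have := hy.2; linarith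
    apply add_nonneg (mul_nonneg h1'.le (Complex.normSq_nonneg _))
      (mul_nonneg h2'.le (Complex.normSq_nonneg _))
  -- bounds
  have hMU0 : 0 ≤ MU := le_trans (norm_nonneg _) (hMU 0 (show (0:ℝ) ∈ Ioo (-1:ℝ) 1 by norm_num))
  have hMV0 : 0 ≤ MV := le_trans (norm_nonneg _) (hMV 0 (show (0:ℝ) ∈ Ioo (-1:ℝ) 1 by norm_num))
  have hψbd : ∀ y ∈ J, |ψ y| ≤ MU * MV := by
    intro y hy
    have h1' : |ψ y| ≤ ‖U y * (starRingEnd ℂ) (V y)‖ := Complex.abs_im_le_norm _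
    rw [norm_mul, Complex.norm_conj] at h1'
    exact h1'.trans (mul_le_mul (hMU y hy) (hMV y hy) (norm_nonneg _) hMU0)
  -- the monotone quantity q
  set q : ℝ → ℝ := fun y => (1 - y^2) ^ cR * ψ y with hq
  have hinner : ∀ y : ℝ, HasDerivAt (fun z : ℝ => 1 - z^2) (-(2*y)) y := by
    intro y
    simpa using ((hasDerivAt_pow 2 y).const_sub 1)
  have hqd : ∀ y ∈ J, HasDerivAt q
      ((1 - y^2) ^ (cR - 1) * (-(2*(g y * a y)) - f y * W y)) y := by
    intro y hy
    have hm : (0:ℝ) < 1 - y^2 := by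
      have h1' := hy.1; have h2' := hy.2; nlinarith
    have hw : HasDerivAt (fun z : ℝ => (1 - z^2) ^ cR)
        (cR * (1 - y^2) ^ (cR - 1) * (-(2*y))) y := by
      have houter := Real.hasDerivAt_rpow_const (x := 1 - y^2) (p := cR) (Or.inl hm.ne')
      exact houter.comp y (hinner y)
    have hmain := hw.mul (hψd y hy)
    have heq : cR * (1 - y^2) ^ (cR - 1) * (-(2*y)) * ψ y + (1 - y^2) ^ cR *
        ((deriv U y * (starRingEnd ℂ) (V y) + U y * (starRingEnd ℂ) (deriv V y)).im)
        = (1 - y^2) ^ (cR - 1) * (-(2*(g y * a y)) - f y * W y) := by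
      have hsplit : (1 - y^2) ^ cR = (1 - y^2) ^ (cR - 1) * (1 - y^2) := by
        have h := Real.rpow_add hm (cR - 1) 1
        rw [Real.rpow_one] at h
        rw [show cR - 1 + 1 = cR by ring] at h
        exact h
      rw [hsplit]
      have hk := hkey y hy
      linear_combination ((1 - y^2) ^ (cR - 1)) * hk
    rw [← heq]
    exact hmain
  have hqanti : AntitoneOn q J := by
    apply antitoneOn_of_deriv_nonpos (convex_Ioo _ _)
    · intro y hy
      exact (hqd y hy).continuousAt.continuousWithinAt
    · intro y hy
      rw [interior_Ioo] at hy
      exact ((hqd y hy).differentiableAt).differentiableWithinAt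
    · intro y hy
      rw [interior_Ioo] at hy
      rw [(hqd y hy).deriv]
      apply mul_nonpos_of_nonneg_of_nonpos (Real.rpow_nonneg (by nlinarith [hy.1, hy.2]) _)
      have := hga y; have := hf0 y; have := hW0 y hy
      nlinarith
  -- ψ vanishes
  have hψ0 : ∀ y ∈ J, ψ y = 0 := by
    intro y0 hy0
    have hm0 : (0:ℝ) < 1 - y0^2 := by
      have h1' := hy0.1; have h2' := hy0.2; nlinarith
    have hub : ∀ y ∈ J, q y ≤ (1 - y^2) ^ cR * (MU * MV) := by
      intro y hy
      apply mul_le_mul_of_nonneg_left _ (Real.rpow_nonneg (by nlinarith [hy.1, hy.2]) _)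
      exact (le_abs_self _).trans (hψbd y hy)
    have hlb : ∀ y ∈ J, (1 - y^2) ^ cR * (-(MU * MV)) ≤ q y := by
      intro y hy
      apply mul_le_mul_of_nonneg_left _ (Real.rpow_nonneg (by nlinarith [hy.1, hy.2]) _)
      exact neg_le_of_abs_le (hψbd y hy)
    have hle : q y0 ≤ 0 :=
      left_squeeze hqanti hub (tendsto_rpow_boundary_left cR hcpos _) hy0
    have hge : 0 ≤ q y0 :=
      right_squeeze_anti hqanti hlb
        (by simpa [mul_neg] using (tendsto_rpow_boundary_right cR hcpos (MU * MV)).neg) hy0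
    have hq0 : q y0 = 0 := le_antisymm hle hge
    have hpos : (0:ℝ) < (1 - y0^2) ^ cR := Real.rpow_pos_of_pos hm0 _
    have := hq0
    rw [hq] at this
    simp only at this
    exact (mul_eq_zero.1 this).resolve_left hpos.ne'
  -- hence f W = 0 and g a = 0 at each point
  have hprod0 : ∀ y ∈ J, f y * W y = 0 ∧ g y * a y = 0 := by
    intro y hy
    have hD : (deriv U y * (starRingEnd ℂ) (V y) + U y * (starRingEnd ℂ) (deriv V y)).im
        = 0 := by
      have hev : ψ =ᶠ[𝓝 y] (fun _ => 0) :=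
        eventually_of_mem (isOpen_Ioo.mem_nhds hy) hψ0
      have hder : deriv ψ y = 0 := by
        rw [hev.deriv_eq]; exact deriv_const y 0
      rw [← (hψd y hy).deriv]; exact hder
    have hk := hkey y hy
    rw [hD, hψ0 y hy] at hk
    have hsum : 2*(g y * a y) + f y * W y = 0 := by
      rw [show (1 - y^2) * (0:ℝ) = 0 by ring] at hk
      linarith [hk]
    have hfW := mul_nonneg (hf0 y) (hW0 y hy)
    have hga' := hga y
    constructor <;> linarith
  -- pointwise vanishing when both abs are nonzero is impossible
  have habs_eq : ∀ z : ℂ, Complex.normSq z = ‖z‖ ^ 2 := by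
    intro z; rw [Complex.sq_norm]
  intro y0 hy0
  have hy0p : (0:ℝ) < y0 + 1 := by have := hy0.1; linarith
  have hy0m : (0:ℝ) < 1 - y0 := by have := hy0.2; linarith
  by_cases hl1 : l = 1
  · -- case l = 1 : f = Sf ^ k with k ≥ 1
    subst hl1
    have hk1 : 1 ≤ k := by omega
    by_contra hcon
    have hS0 : Sf y0 ≠ 0 := by
      intro h0
      apply hcon
      have h0' : ‖U y0‖ ^ 2 + ‖V y0‖ ^ 2 = 0 := h0
      have h1' := (add_eq_zero_iff_of_nonneg (sq_nonneg _) (sq_nonneg _)).1 h0'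
      exact ⟨norm_eq_zero.1 (sq_eq_zero_iff.1 h1'.1),
        norm_eq_zero.1 (sq_eq_zero_iff.1 h1'.2)⟩
    have hfpos : 0 < f y0 := by
      have hSpos : 0 < Sf y0 := lt_of_le_of_ne (hSf0 y0) (Ne.symm hS0)
      show 0 < ((1:ℕ):ℝ) * Sf y0 ^ k * (2 * a y0) ^ (1 - 1)
      norm_num [pow_pos hSpos k]
    have hW0' : W y0 = 0 := by
      have := (hprod0 y0 hy0).1
      rcases mul_eq_zero.1 this with h | h
      · exact absurd h hfpos.ne'
      · exact h
    -- W = 0 forces U = V = 0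
    apply hcon
    have hW0'' : (y0 + 1) * Complex.normSq (U y0) + (1 - y0) * Complex.normSq (V y0) = 0 :=
      hW0'
    have hterm1 : (y0 + 1) * Complex.normSq (U y0) = 0 := by
      linarith [mul_nonneg hy0p.le (Complex.normSq_nonneg (U y0)),
        mul_nonneg hy0m.le (Complex.normSq_nonneg (V y0))]
    have hterm2 : (1 - y0) * Complex.normSq (V y0) = 0 := by
      linarith [mul_nonneg hy0p.le (Complex.normSq_nonneg (U y0)),
        mul_nonneg hy0m.le (Complex.normSq_nonneg (V y0))]
    exact ⟨Complex.normSq_eq_zero.1 ((mul_eq_zero.1 hterm1).resolve_left hy0p.ne'),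
      Complex.normSq_eq_zero.1 ((mul_eq_zero.1 hterm2).resolve_left hy0m.ne')⟩
  · -- case l ≥ 2 (l odd, l ≥ 3): show a ≡ 0, hence F ≡ G ≡ 0, then linear ODE
    have hl2 : 2 ≤ l := by omega
    have ha0 : ∀ y ∈ J, a y = 0 := by
      intro y hy
      by_contra hay
      have hu0 : U y ≠ 0 := by
        intro h; apply hay; rw [ha]; simp [h]
      have hWpos : 0 < W y := by
        have h1' : (0:ℝ) < y + 1 := by have := hy.1; linarith
        have h2' : (0:ℝ) < 1 - y := by have := hy.2; linarith
        have hnU : 0 < Complex.normSq (U y) := Complex.normSq_pos.2 hu0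
        show 0 < (y + 1) * Complex.normSq (U y) + (1 - y) * Complex.normSq (V y)
        nlinarith [Complex.normSq_nonneg (V y)]
      have hfy : f y = 0 := by
        have := (hprod0 y hy).1
        rcases mul_eq_zero.1 this with h | h
        · exact h
        · exact absurd h hWpos.ne'
      have hSpos : 0 < Sf y := by
        show 0 < ‖U y‖ ^ 2 + ‖V y‖ ^ 2
        have habs : 0 < ‖U y‖ := norm_pos_iff.mpr hu0
        nlinarith [sq_nonneg (‖V y‖), pow_pos habs 2]
      have hfpos : 0 < f y := by
        show 0 < (l:ℝ) * Sf y ^ k * (2 * a y) ^ (l - 1)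
        apply mul_pos (mul_pos (by exact_mod_cast hlpos) (pow_pos hSpos k))
        have h2a : (2 * a y) ≠ 0 := by
          simp only [ne_eq, mul_eq_zero]; push_neg; exact ⟨two_ne_zero, hay⟩
        exact hEvenl1.pow_pos h2a
      exact hfpos.ne' hfy
    have hFG0 : ∀ y ∈ J, Ffun k l U V y = 0 ∧ Gfun k l U V y = 0 := by
      intro y hy
      have haz := ha0 y hy
      constructor
      · rw [hFre y]
        have hz : f y = 0 := by
          show (l:ℝ) * Sf y ^ k * (2 * a y) ^ (l - 1) = 0
          rw [haz, show (2:ℝ) * 0 = 0 by ring, zero_pow (by omega : l - 1 ≠ 0), mul_zero]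
        rw [hz]; simp
      · rw [hGre y]
        have hz : g y = 0 := by
          show (k:ℝ) * Sf y ^ (k - 1) * (2 * a y) ^ l = 0
          rw [haz, show (2:ℝ) * 0 = 0 by ring, zero_pow (by omega : l ≠ 0), mul_zero]
        rw [hz]; simp
    -- linear ODEs
    have hlinU : ∀ y ∈ J, ((y:ℂ)+1) * deriv U y = -((cR:ℝ):ℂ) * U y := by
      intro y hy
      have := h1 y hy
      rw [(hFG0 y hy).1, (hFG0 y hy).2] at this
      rw [this]; ring
    have hlinV : ∀ y ∈ J, ((y:ℂ)-1) * deriv V y = -((cR:ℝ):ℂ) * V y := by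
      intro y hy
      have := h2 y hy
      rw [(hFG0 y hy).1, (hFG0 y hy).2] at this
      rw [this]; ring
    -- normSq derivative helper
    have hnormd : ∀ (Z : ℝ → ℂ), (∀ y ∈ J, HasDerivAt Z (deriv Z y) y) → ∀ y ∈ J,
        HasDerivAt (fun z => Complex.normSq (Z z)) (2 * (deriv Z y * (starRingEnd ℂ) (Z y)).re) y := by
      intro Z hdZ y hy
      have hprod : HasDerivAt (fun z => Z z * (starRingEnd ℂ) (Z z))
          (deriv Z y * (starRingEnd ℂ) (Z y) + Z y * (starRingEnd ℂ) (deriv Z y)) y := by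
        exact (hdZ y hy).mul ((hdZ y hy).star)
      have hre := Complex.reCLM.hasFDerivAt.comp_hasDerivAt y hprod
      have hfun : (fun z => (Z z * (starRingEnd ℂ) (Z z)).re) = fun z => Complex.normSq (Z z) := by
        funext z; rw [Complex.mul_conj]; simp
      have hval : (deriv Z y * (starRingEnd ℂ) (Z y) + Z y * (starRingEnd ℂ) (deriv Z y)).re
          = 2 * (deriv Z y * (starRingEnd ℂ) (Z y)).re := by
        simp [Complex.add_re, Complex.mul_re]
        ring
      rw [← hval, ← hfun]
      exact hre
    -- U vanishes
    have hU0 : U y0 = 0 := by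
      set NU : ℝ → ℝ := fun z => (z + 1) * (Complex.normSq (U z)) ^ p with hNU
      have hNUd : ∀ y ∈ J, HasDerivAt NU 0 y := by
        intro y hy
        have hn := hnormd U hdU y hy
        have hNp : HasDerivAt (fun z => (Complex.normSq (U z)) ^ p)
            ((p:ℝ) * (Complex.normSq (U y)) ^ (p - 1) * (2 * (deriv U y * (starRingEnd ℂ) (U y)).re)) y := by
          exact hn.pow p
        have hid : HasDerivAt (fun z : ℝ => z + 1) 1 y := (hasDerivAt_id y).add_const 1
        have hmul := hid.mul hNp
        have hre2 : (y + 1) * (deriv U y * (starRingEnd ℂ) (U y)).re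
            = -cR * Complex.normSq (U y) := by
          have hc1 : (((y:ℂ)+1) * (deriv U y * (starRingEnd ℂ) (U y)))
              = -((cR:ℝ):ℂ) * ((Complex.normSq (U y) : ℝ) : ℂ) := by
            rw [← mul_assoc, hlinU y hy, mul_assoc, Complex.mul_conj]
          have := congrArg Complex.re hc1
          simpa [Complex.mul_re, Complex.ofReal_re, Complex.ofReal_im,
            Complex.add_re, Complex.add_im] using this
        have hzero : 1 * (Complex.normSq (U y)) ^ p + (y + 1) *
            ((p:ℝ) * (Complex.normSq (U y)) ^ (p - 1) * (2 * (deriv U y * (starRingEnd ℂ) (U y)).re))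
            = 0 := by
          have hstep : (y + 1) * ((p:ℝ) * (Complex.normSq (U y)) ^ (p - 1) *
              (2 * (deriv U y * (starRingEnd ℂ) (U y)).re))
              = (p:ℝ) * (Complex.normSq (U y)) ^ (p - 1) * 2 *
                ((y + 1) * (deriv U y * (starRingEnd ℂ) (U y)).re) := by ring
          rw [hstep, hre2]
          have hpow : (Complex.normSq (U y)) ^ (p - 1) * Complex.normSq (U y)
              = (Complex.normSq (U y)) ^ p := by
            rw [← pow_succ]; congr 1; omega
          linear_combination (-(2 * cR * (p:ℝ))) * hpow +
            (-((Complex.normSq (U y)) ^ p)) * h2cp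
        rw [← hzero]
        exact hmul
      have hNUanti : AntitoneOn NU J := by
        apply antitoneOn_of_deriv_nonpos (convex_Ioo _ _)
        · intro y hy; exact (hNUd y hy).continuousAt.continuousWithinAt
        · intro y hy; rw [interior_Ioo] at hy
          exact (hNUd y hy).differentiableAt.differentiableWithinAt
        · intro y hy; rw [interior_Ioo] at hy
          rw [(hNUd y hy).deriv]
      have hub : ∀ y ∈ J, NU y ≤ (y + 1) * (MU^2) ^ p := by
        intro y hy
        have h1' : (0:ℝ) < y + 1 := by have := hy.1; linarith
        apply mul_le_mul_of_nonneg_left _ h1'.le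
        apply pow_le_pow_left₀ (Complex.normSq_nonneg _)
        rw [habs_eq]
        exact pow_le_pow_left₀ (norm_nonneg _) (hMU y hy) 2
      have htend : Tendsto (fun y : ℝ => (y + 1) * (MU^2) ^ p) (𝓝[>] (-1:ℝ)) (𝓝 0) := by
        have h0 : Tendsto (fun y : ℝ => (y + 1) * (MU^2) ^ p) (𝓝 (-1:ℝ))
            (𝓝 (((-1:ℝ) + 1) * (MU^2) ^ p)) := Continuous.tendsto (by fun_prop) _
        norm_num at h0
        exact h0.mono_left nhdsWithin_le_nhds
      have hle : NU y0 ≤ 0 := left_squeeze hNUanti hub htend hy0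
      have hge : 0 ≤ NU y0 :=
        mul_nonneg hy0p.le (pow_nonneg (Complex.normSq_nonneg _) _)
      have h0 : NU y0 = 0 := le_antisymm hle hge
      have : (Complex.normSq (U y0)) ^ p = 0 := by
        rcases mul_eq_zero.1 h0 with h | h
        · exact absurd h hy0p.ne'
        · exact h
      have := pow_eq_zero_iff (by omega : p ≠ 0) |>.1 this
      exact Complex.normSq_eq_zero.1 this
    -- V vanishes
    have hV0 : V y0 = 0 := by
      set NV : ℝ → ℝ := fun z => (1 - z) * (Complex.normSq (V z)) ^ p with hNV
      have hNVd : ∀ y ∈ J, HasDerivAt NV 0 y := by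
        intro y hy
        have hn := hnormd V hdV y hy
        have hNp : HasDerivAt (fun z => (Complex.normSq (V z)) ^ p)
            ((p:ℝ) * (Complex.normSq (V y)) ^ (p - 1) * (2 * (deriv V y * (starRingEnd ℂ) (V y)).re)) y := by
          exact hn.pow p
        have hid : HasDerivAt (fun z : ℝ => 1 - z) (-1) y := by
          simpa using (hasDerivAt_id y).const_sub 1
        have hmul := hid.mul hNp
        have hre2 : (1 - y) * (deriv V y * (starRingEnd ℂ) (V y)).re
            = cR * Complex.normSq (V y) := by
          have hc1 : ((1 - (y:ℂ)) * (deriv V y * (starRingEnd ℂ) (V y)))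
              = ((cR:ℝ):ℂ) * ((Complex.normSq (V y) : ℝ) : ℂ) := by
            rw [← mul_assoc]
            rw [show (1 - (y:ℂ)) * deriv V y = -(((y:ℂ)-1) * deriv V y) by ring, hlinV y hy]
            rw [show -(-((cR:ℝ):ℂ) * V y) = ((cR:ℝ):ℂ) * V y by ring, mul_assoc,
              Complex.mul_conj]
          have := congrArg Complex.re hc1
          simpa [Complex.mul_re, Complex.ofReal_re, Complex.ofReal_im,
            Complex.sub_re, Complex.sub_im] using this
        have hzero : -1 * (Complex.normSq (V y)) ^ p + (1 - y) *
            ((p:ℝ) * (Complex.normSq (V y)) ^ (p - 1) * (2 * (deriv V y * (starRingEnd ℂ) (V y)).re))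
            = 0 := by
          have hstep : (1 - y) * ((p:ℝ) * (Complex.normSq (V y)) ^ (p - 1) *
              (2 * (deriv V y * (starRingEnd ℂ) (V y)).re))
              = (p:ℝ) * (Complex.normSq (V y)) ^ (p - 1) * 2 *
                ((1 - y) * (deriv V y * (starRingEnd ℂ) (V y)).re) := by ring
          rw [hstep, hre2]
          have hpow : (Complex.normSq (V y)) ^ (p - 1) * Complex.normSq (V y)
              = (Complex.normSq (V y)) ^ p := by
            rw [← pow_succ]; congr 1; omega
          linear_combination (2 * cR * (p:ℝ)) * hpow +
            ((Complex.normSq (V y)) ^ p) * h2cp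
        rw [← hzero]
        exact hmul
      have hNVmono : MonotoneOn NV J := by
        apply monotoneOn_of_deriv_nonneg (convex_Ioo _ _)
        · intro y hy; exact (hNVd y hy).continuousAt.continuousWithinAt
        · intro y hy; rw [interior_Ioo] at hy
          exact (hNVd y hy).differentiableAt.differentiableWithinAt
        · intro y hy; rw [interior_Ioo] at hy
          rw [(hNVd y hy).deriv]
      have hub : ∀ y ∈ J, NV y ≤ (1 - y) * (MV^2) ^ p := by
        intro y hy
        have h2' : (0:ℝ) < 1 - y := by have := hy.2; linarith
        apply mul_le_mul_of_nonneg_left _ h2'.le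
        apply pow_le_pow_left₀ (Complex.normSq_nonneg _)
        rw [habs_eq]
        exact pow_le_pow_left₀ (norm_nonneg _) (hMV y hy) 2
      have htend : Tendsto (fun y : ℝ => (1 - y) * (MV^2) ^ p) (𝓝[<] (1:ℝ)) (𝓝 0) := by
        have h0 : Tendsto (fun y : ℝ => (1 - y) * (MV^2) ^ p) (𝓝 (1:ℝ))
            (𝓝 ((1 - (1:ℝ)) * (MV^2) ^ p)) := Continuous.tendsto (by fun_prop) _
        norm_num at h0
        exact h0.mono_left nhdsWithin_le_nhds
      have hle : NV y0 ≤ 0 := right_squeeze_mono hNVmono hub htend hy0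
      have hge : 0 ≤ NV y0 :=
        mul_nonneg hy0m.le (pow_nonneg (Complex.normSq_nonneg _) _)
      have h0 : NV y0 = 0 := le_antisymm hle hge
      have : (Complex.normSq (V y0)) ^ p = 0 := by
        rcases mul_eq_zero.1 h0 with h | h
        · exact absurd h hy0m.ne'
        · exact h
      have := pow_eq_zero_iff (by omega : p ≠ 0) |>.1 this
      exact Complex.normSq_eq_zero.1 this
    exact ⟨hU0, hV0⟩
end

section
/- Let k be a nonnegative integer and ℓ an even nonnegative integer with p := k + ℓ − 1 ≥ 1. Suppose (U, V) solves the self-similar system (S) on (−1,1), J ⊆ (−1,1) is an open subinterval on which U(y) ≠ 0 and V(y) ≠ 0, and θ : J → ℝ is a continuous function such that conj(U(y))·V(y) = |U(y)|·|V(y)|·exp(i·θ(y)) for all y ∈ J. Then θ is nondecreasing on J. -/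
open Set Complex Filter Topology

lemma key_nonneg (k l : ℕ) (hleven : Even l)
    (U V : ℝ → ℂ)
    (hS : SolvesS k l U V (Ioo (-1 : ℝ) 1))
    {y : ℝ} (hy : y ∈ Ioo (-1:ℝ) 1)
    (hu0 : U y ≠ 0) (hv0 : V y ≠ 0) :
    0 ≤ (((starRingEnd ℂ) (deriv U y) * V y + (starRingEnd ℂ) (U y) * deriv V y)
        / ((starRingEnd ℂ) (U y) * V y)).im := by
  obtain ⟨hy1, hy2⟩ := hy
  obtain ⟨-, -, heqs⟩ := hS
  obtain ⟨eq1, eq2⟩ := heqs y ⟨hy1, hy2⟩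
  -- real quantities
  set S : ℝ := ‖U y‖ ^ 2 + ‖V y‖ ^ 2 with hSdef
  set Wre : ℝ := ((starRingEnd ℂ) (U y) * V y).re with hWredef
  set Fr : ℝ := l * S ^ k * (2 * Wre) ^ (l-1) with hFrdef
  set Gr : ℝ := k * S ^ (k-1) * (2 * Wre) ^ l with hGrdef
  set cr : ℝ := 1 / (2 * ((k + l - 1 : ℕ) : ℝ)) with hcrdef
  -- R is real
  have hR : Rfun U V y = ((2 * Wre : ℝ) : ℂ) := by
    have h1 : U y * (starRingEnd ℂ) (V y)
        = (starRingEnd ℂ) ((starRingEnd ℂ) (U y) * V y) := by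
      simp [map_mul]
    rw [Rfun, h1, add_comm, Complex.add_conj]
  have hF : Ffun k l U V y = ((Fr : ℝ) : ℂ) := by
    rw [Ffun, hR, hFrdef]
    push_cast [hSdef]
    ring
  have hG : Gfun k l U V y = ((Gr : ℝ) : ℂ) := by
    rw [Gfun, hR, hGrdef]
    push_cast [hSdef]
    ring
  have hc : (1 / (2 * ((k + l - 1 : ℕ) : ℂ))) = ((cr : ℝ) : ℂ) := by
    rw [hcrdef]; push_cast; ring
  have hα2 : ((y:ℂ) + 1) = ((y + 1 : ℝ) : ℂ) := by push_cast; ring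
  have hβ2 : ((y:ℂ) - 1) = ((y - 1 : ℝ) : ℂ) := by push_cast; ring
  rw [hF, hG, hc, hα2] at eq1
  rw [hF, hG, hc, hβ2] at eq2
  have hy1' : ((y + 1 : ℝ) : ℂ) ≠ 0 := Complex.ofReal_ne_zero.2 (by linarith)
  have hy2' : ((y - 1 : ℝ) : ℂ) ≠ 0 := Complex.ofReal_ne_zero.2 (by linarith)
  -- solve for derivatives
  have h1 : ((y + 1 : ℝ) : ℂ) * deriv U y
      = -Complex.I * (((Fr:ℝ):ℂ) * V y + ((Gr:ℝ):ℂ) * U y) - ((cr:ℝ):ℂ) * U y := by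
    linear_combination (-Complex.I) * eq1
      + (((y + 1 : ℝ) : ℂ) * deriv U y + ((cr:ℝ):ℂ) * U y) * Complex.I_mul_I
  have h2 : ((y - 1 : ℝ) : ℂ) * deriv V y
      = -Complex.I * (((Fr:ℝ):ℂ) * U y + ((Gr:ℝ):ℂ) * V y) - ((cr:ℝ):ℂ) * V y := by
    linear_combination (-Complex.I) * eq2
      + (((y - 1 : ℝ) : ℂ) * deriv V y + ((cr:ℝ):ℂ) * V y) * Complex.I_mul_I
  have hcu' : ((y + 1 : ℝ) : ℂ) * (starRingEnd ℂ) (deriv U y)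
      = Complex.I * (((Fr:ℝ):ℂ) * (starRingEnd ℂ) (V y) + ((Gr:ℝ):ℂ) * (starRingEnd ℂ) (U y))
        - ((cr:ℝ):ℂ) * (starRingEnd ℂ) (U y) := by
    have h := congrArg (starRingEnd ℂ) h1
    simp only [map_mul, map_add, map_sub, map_neg, Complex.conj_I, Complex.conj_ofReal] at h
    linear_combination h
  have hcu'eq : (starRingEnd ℂ) (deriv U y)
      = (Complex.I * (((Fr:ℝ):ℂ) * (starRingEnd ℂ) (V y) + ((Gr:ℝ):ℂ) * (starRingEnd ℂ) (U y))
        - ((cr:ℝ):ℂ) * (starRingEnd ℂ) (U y)) / ((y + 1 : ℝ) : ℂ) := by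
    rw [eq_div_iff hy1']; linear_combination hcu'
  have hv'eq : deriv V y
      = (-Complex.I * (((Fr:ℝ):ℂ) * U y + ((Gr:ℝ):ℂ) * V y) - ((cr:ℝ):ℂ) * V y)
        / ((y - 1 : ℝ) : ℂ) := by
    rw [eq_div_iff hy2']; linear_combination h2
  -- key complex identity
  have hconjW : (starRingEnd ℂ) ((starRingEnd ℂ) (U y) * V y)
      = U y * (starRingEnd ℂ) (V y) := by simp [map_mul]
  have hnu : ((Complex.normSq (U y) : ℝ) : ℂ) = U y * (starRingEnd ℂ) (U y) :=
    (Complex.mul_conj (U y)).symm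
  have hnv : ((Complex.normSq (V y) : ℝ) : ℂ) = V y * (starRingEnd ℂ) (V y) :=
    (Complex.mul_conj (V y)).symm
  have hnw : ((Complex.normSq ((starRingEnd ℂ) (U y) * V y) : ℝ) : ℂ)
      = ((starRingEnd ℂ) (U y) * V y) * (U y * (starRingEnd ℂ) (V y)) := by
    rw [← hconjW]; exact (Complex.mul_conj _).symm
  have hkey : ((starRingEnd ℂ) (deriv U y) * V y + (starRingEnd ℂ) (U y) * deriv V y)
        * (U y * (starRingEnd ℂ) (V y))
      = Complex.I * ((Fr:ℝ):ℂ)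
          * ((Complex.normSq (V y) / (y+1) - Complex.normSq (U y) / (y-1) : ℝ) : ℂ)
          * (U y * (starRingEnd ℂ) (V y))
        + Complex.I * ((Gr:ℝ):ℂ)
          * ((Complex.normSq ((starRingEnd ℂ) (U y) * V y) : ℝ) : ℂ)
          * ((1/(y+1) - 1/(y-1) : ℝ) : ℂ)
        - ((cr:ℝ):ℂ)
          * ((Complex.normSq ((starRingEnd ℂ) (U y) * V y) : ℝ) : ℂ)
          * ((1/(y+1) + 1/(y-1) : ℝ) : ℂ) := by
    rw [hcu'eq, hv'eq]
    push_cast [hnu, hnv, hnw]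
    field_simp
    ring
  -- imaginary part
  have him : (((starRingEnd ℂ) (deriv U y) * V y + (starRingEnd ℂ) (U y) * deriv V y)
        * (U y * (starRingEnd ℂ) (V y))).im
      = Fr * (Complex.normSq (V y) / (y+1) - Complex.normSq (U y) / (y-1)) * Wre
        + Gr * Complex.normSq ((starRingEnd ℂ) (U y) * V y) * (1/(y+1) - 1/(y-1)) := by
    have hre : (U y * (starRingEnd ℂ) (V y)).re = Wre := by
      rw [hWredef, ← hconjW, Complex.conj_re]
    rw [hkey]
    simp only [Complex.add_im, Complex.sub_im, Complex.mul_im, Complex.mul_re,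
      Complex.I_re, Complex.I_im, Complex.ofReal_re, Complex.ofReal_im, hre]
    ring
  -- nonnegativity of the pieces
  have hSnn : 0 ≤ S := by rw [hSdef]; positivity
  have hX : 0 ≤ Complex.normSq (V y) / (y+1) - Complex.normSq (U y) / (y-1) := by
    have ha : 0 ≤ Complex.normSq (V y) / (y+1) :=
      div_nonneg (Complex.normSq_nonneg _) (by linarith)
    have hb : Complex.normSq (U y) / (y-1) ≤ 0 :=
      div_nonpos_iff.2 (Or.inl ⟨Complex.normSq_nonneg _, by linarith⟩)
    linarith
  have hY : 0 ≤ 1/(y+1) - 1/(y-1) := by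
    have ha : 0 ≤ 1/(y+1) := div_nonneg zero_le_one (by linarith)
    have hb : 1/(y-1) ≤ 0 := div_nonpos_iff.2 (Or.inl ⟨zero_le_one, by linarith⟩)
    linarith
  have hterm1 : 0 ≤ Fr * (Complex.normSq (V y) / (y+1) - Complex.normSq (U y) / (y-1)) * Wre := by
    rcases Nat.eq_zero_or_pos l with h0 | hl
    · rw [hFrdef, h0]; simp
    · have hpw : (2*Wre)^(l-1) * (2*Wre) = (2*Wre)^l := by
        rw [← pow_succ]; congr 1; omega
      have heq : Fr * (Complex.normSq (V y) / (y+1) - Complex.normSq (U y) / (y-1)) * Wre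
          = (l:ℝ) * S^k * (Complex.normSq (V y) / (y+1) - Complex.normSq (U y) / (y-1))
            * ((2*Wre)^l) / 2 := by
        rw [hFrdef]
        linear_combination ((l:ℝ) * S^k
          * (Complex.normSq (V y) / (y+1) - Complex.normSq (U y) / (y-1)) / 2) * hpw
      rw [heq]
      have hev : (0:ℝ) ≤ (2*Wre)^l := hleven.pow_nonneg _
      have : (0:ℝ) ≤ (l:ℝ) * S^k := by positivity
      have := mul_nonneg (mul_nonneg this hX) hev
      linarith
  have hterm2 : 0 ≤ Gr * Complex.normSq ((starRingEnd ℂ) (U y) * V y) * (1/(y+1) - 1/(y-1)) := by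
    have hGnn : 0 ≤ Gr := by
      rw [hGrdef]
      have hev : (0:ℝ) ≤ (2*Wre)^l := hleven.pow_nonneg _
      have h1 : (0:ℝ) ≤ (k:ℝ) * S^(k-1) := by positivity
      exact mul_nonneg h1 hev
    exact mul_nonneg (mul_nonneg hGnn (Complex.normSq_nonneg _)) hY
  -- assemble
  have hW0 : (starRingEnd ℂ) (U y) * V y ≠ 0 := by
    apply mul_ne_zero _ hv0
    rw [starRingEnd_apply]
    exact star_ne_zero.mpr hu0
  have hdiv : ((starRingEnd ℂ) (deriv U y) * V y + (starRingEnd ℂ) (U y) * deriv V y)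
        / ((starRingEnd ℂ) (U y) * V y)
      = (((starRingEnd ℂ) (deriv U y) * V y + (starRingEnd ℂ) (U y) * deriv V y)
          * (U y * (starRingEnd ℂ) (V y)))
        / ((Complex.normSq ((starRingEnd ℂ) (U y) * V y) : ℝ) : ℂ) := by
    rw [← Complex.mul_conj, hconjW]
    rw [mul_div_mul_right _ _ (by rw [← hconjW, starRingEnd_apply]; exact star_ne_zero.mpr hW0)]
  rw [hdiv, Complex.div_ofReal_im, him]
  exact div_nonneg (add_nonneg hterm1 hterm2) (Complex.normSq_nonneg _)

lemma hasDerivAt_phase {W : ℝ → ℂ} {θ : ℝ → ℝ} {s : Set ℝ} (hs : IsOpen s)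
    {y₀ : ℝ} (hy₀ : y₀ ∈ s) {w : ℂ} (hWd : HasDerivAt W w y₀)
    (hW0 : W y₀ ≠ 0)
    (hθc : ContinuousOn θ s)
    (hθ : ∀ y ∈ s, Complex.exp (Complex.I * θ y) = W y / ((‖W y‖ : ℝ) : ℂ)) :
    HasDerivAt θ ((w / W y₀).im) y₀ := by
  have hq : HasDerivAt (fun y => W y / W y₀) (w / W y₀) y₀ := hWd.div_const _
  have hq0 : W y₀ / W y₀ = 1 := div_self hW0
  have hlog : HasDerivAt (fun y => Complex.log (W y / W y₀)) (w / W y₀) y₀ := by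
    have := hq.clog_real (by rw [hq0]; exact one_mem_slitPlane)
    simpa [hq0] using this
  set φ : ℝ → ℝ := fun y => θ y₀ + (Complex.log (W y / W y₀)).im with hφdef
  have hφ : HasDerivAt φ ((w / W y₀).im) y₀ := by
    have him : HasDerivAt (fun y => (Complex.log (W y / W y₀)).im) ((w / W y₀).im) y₀ :=
      Complex.imCLM.hasFDerivAt.comp_hasDerivAt y₀ hlog
    exact him.const_add (θ y₀)
  have hφy₀ : φ y₀ = θ y₀ := by simp [hφdef, hq0, Complex.log_one]
  have hWne : ∀ᶠ y in 𝓝 y₀, W y ≠ 0 :=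
    hWd.continuousAt.eventually_ne hW0
  have hsmem : ∀ᶠ y in 𝓝 y₀, y ∈ s := hs.eventually_mem hy₀
  have hexp : ∀ᶠ y in 𝓝 y₀, Complex.exp (Complex.I * θ y) = Complex.exp (Complex.I * φ y) := by
    filter_upwards [hWne, hsmem] with y hWy hys
    have habs : ((‖W y‖ : ℝ) : ℂ) ≠ 0 := by
      simpa using (norm_ne_zero_iff.mpr hWy)
    have habs0 : ((‖W y₀‖ : ℝ) : ℂ) ≠ 0 := by
      simpa using (norm_ne_zero_iff.mpr hW0)
    have hz : W y / W y₀ ≠ 0 := div_ne_zero hWy hW0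
    have harg : Complex.exp (((W y / W y₀).arg : ℂ) * Complex.I)
        = (W y / W y₀) / ((‖W y / W y₀‖ : ℝ) : ℂ) := by
      rw [eq_div_iff (by simpa using norm_ne_zero_iff.mpr hz)]
      rw [mul_comm]
      exact (Complex.norm_mul_exp_arg_mul_I _)
    have : Complex.exp (Complex.I * φ y)
        = Complex.exp (Complex.I * θ y₀) * Complex.exp (((W y / W y₀).arg : ℂ) * Complex.I) := by
      rw [← Complex.exp_add]
      congr 1
      simp only [hφdef, Complex.log_im]
      push_cast
      ring
    rw [this, harg, hθ y hys, hθ y₀ hy₀]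
    rw [norm_div]
    field_simp
    push_cast
    field_simp
  have hint : ∀ᶠ y in 𝓝 y₀, ∃ n : ℤ, θ y - φ y = n * (2 * Real.pi) := by
    filter_upwards [hexp] with y hy
    have h1 : Complex.exp (Complex.I * θ y - Complex.I * φ y) = 1 := by
      rw [Complex.exp_sub, hy, div_self (Complex.exp_ne_zero _)]
    rw [Complex.exp_eq_one_iff] at h1
    obtain ⟨n, hn⟩ := h1
    refine ⟨n, ?_⟩
    have him := congrArg Complex.im hn
    simpa [Complex.mul_im, Complex.mul_re] using him
  have h2π : (0:ℝ) < 2 * Real.pi := by positivity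
  have hcont : ContinuousAt (fun y => θ y - φ y) y₀ :=
    ((hθc.continuousAt (hs.mem_nhds hy₀)).sub hφ.continuousAt)
  have hsmall : ∀ᶠ y in 𝓝 y₀, |θ y - φ y| < 2 * Real.pi := by
    have h0 : θ y₀ - φ y₀ = 0 := by rw [hφy₀]; ring
    have := hcont.tendsto
    rw [h0] at this
    have hball : ∀ᶠ z in 𝓝 (0:ℝ), |z| < 2 * Real.pi := by
      filter_upwards [Metric.ball_mem_nhds (0:ℝ) h2π] with z hz
      simpa [Real.dist_eq] using hz
    exact this.eventually hball
  have heq : θ =ᶠ[𝓝 y₀] φ := by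
    filter_upwards [hint, hsmall] with y ⟨n, hn⟩ hlt
    have : |(n:ℝ)| * (2*Real.pi) < 1 * (2*Real.pi) := by
      rw [one_mul]
      calc |(n:ℝ)| * (2*Real.pi) = |(n:ℝ) * (2*Real.pi)| := by
            rw [abs_mul, abs_of_pos h2π]
        _ = |θ y - φ y| := by rw [hn]
        _ < 2*Real.pi := hlt
    have hn1 : |(n:ℝ)| < 1 := lt_of_mul_lt_mul_right this (le_of_lt h2π)
    have : n = 0 := by
      have h2 : |n| < 1 := by exact_mod_cast (by simpa [Int.cast_abs] using hn1 : ((|n| : ℤ) : ℝ) < 1)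
      have := abs_lt.mp h2
      omega
    have : θ y - φ y = 0 := by simp [hn, this]
    linarith
  exact hφ.congr_of_eventuallyEq heq

/-- for even `ℓ`, a continuous relative phase `θ` with
`conj(U) V = |U| |V| e^{iθ}` is nondecreasing on any open subinterval of
`(-1,1)` where `U, V` do not vanish. -/
theorem phase_monotone_even (k l : ℕ) (hleven : Even l)
    (hp : 1 ≤ k + l - 1) (U V : ℝ → ℂ)
    (hS : SolvesS k l U V (Ioo (-1 : ℝ) 1))
    (a b : ℝ) (hab : Ioo a b ⊆ Ioo (-1 : ℝ) 1)
    (hU : ∀ y ∈ Ioo a b, U y ≠ 0) (hV : ∀ y ∈ Ioo a b, V y ≠ 0)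
    (θ : ℝ → ℝ) (hθc : ContinuousOn θ (Ioo a b))
    (hθ : ∀ y ∈ Ioo a b,
      (starRingEnd ℂ) (U y) * V y
        = ((‖U y‖ * ‖V y‖ : ℝ) : ℂ) * Complex.exp (Complex.I * θ y)) :
    MonotoneOn θ (Ioo a b) := by
  set W : ℝ → ℂ := fun y => (starRingEnd ℂ) (U y) * V y with hWdef
  -- derivative facts at each point of Ioo a b
  have hder : ∀ y ∈ Ioo a b, HasDerivAt θ
      ((((starRingEnd ℂ) (deriv U y) * V y + (starRingEnd ℂ) (U y) * deriv V y) / W y).im) y := by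
    intro y hy
    have hyJ : y ∈ Ioo (-1:ℝ) 1 := hab hy
    have hnhds : Ioo (-1:ℝ) 1 ∈ 𝓝 y := isOpen_Ioo.mem_nhds hyJ
    have hUd : HasDerivAt U (deriv U y) y :=
      (((hS.1.differentiableOn one_ne_zero).differentiableAt hnhds)).hasDerivAt
    have hVd : HasDerivAt V (deriv V y) y :=
      (((hS.2.1.differentiableOn one_ne_zero).differentiableAt hnhds)).hasDerivAt
    have hUconj : HasDerivAt (fun t => (starRingEnd ℂ) (U t)) ((starRingEnd ℂ) (deriv U y)) y := by
      have := hUd.star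
      simp only [starRingEnd_apply]
      exact this
    have hWd : HasDerivAt W
        ((starRingEnd ℂ) (deriv U y) * V y + (starRingEnd ℂ) (U y) * deriv V y) y :=
      hUconj.mul hVd
    have hW0 : W y ≠ 0 := by
      apply mul_ne_zero _ (hV y hy)
      rw [starRingEnd_apply]
      exact star_ne_zero.mpr (hU y hy)
    refine hasDerivAt_phase isOpen_Ioo hy hWd hW0 hθc ?_
    intro z hz
    have habsW : ‖W z‖ = ‖U z‖ * ‖V z‖ := by
      rw [show W z = (starRingEnd ℂ) (U z) * V z from rfl, norm_mul, Complex.norm_conj]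
    have hne : (‖U z‖ * ‖V z‖ : ℝ) ≠ 0 :=
      mul_ne_zero (norm_ne_zero_iff.mpr (hU z hz)) (norm_ne_zero_iff.mpr (hV z hz))
    have hne' : ((‖U z‖ * ‖V z‖ : ℝ) : ℂ) ≠ 0 := Complex.ofReal_ne_zero.2 hne
    rw [habsW, show W z = ((‖U z‖ * ‖V z‖ : ℝ) : ℂ)
        * Complex.exp (Complex.I * θ z) from hθ z hz]
    have hA : ((‖U z‖ : ℝ) : ℂ) ≠ 0 := Complex.ofReal_ne_zero.2 (norm_ne_zero_iff.mpr (hU z hz))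
    have hB : ((‖V z‖ : ℝ) : ℂ) ≠ 0 := Complex.ofReal_ne_zero.2 (norm_ne_zero_iff.mpr (hV z hz))
    field_simp
  -- monotonicity
  have hi : interior (Ioo a b) = Ioo a b := isOpen_Ioo.interior_eq
  apply monotoneOn_of_deriv_nonneg (convex_Ioo a b) hθc
  · rw [hi]
    intro y hy
    exact ((hder y hy).differentiableAt).differentiableWithinAt
  · rw [hi]
    intro y hy
    rw [(hder y hy).deriv]
    exact key_nonneg k l hleven U V hS (hab hy) (hU y hy) (hV y hy)
end

section
/- Let ξ₀ > 0 and let y₀ := −1/√(1 + 16·ξ₀⁴), which is the unique y ∈ (−1,0) satisfying 1 + 4·ξ₀²·y·(1−y²)^(−1/2) = 0. For y ∈ (y₀, 1) define ρ(y) := ξ₀·(1 + 4·ξ₀²·y·(1−y²)^(−1/2))^(−1/2), U(y) := (1+y)^(−1/2)·ρ(y), and V(y) := −i·(1−y)^(−1/2)·ρ(y). Then (U, V) solves the self-similar system (S) with k = ℓ = 1 (so p = 1) on the interval (y₀, 1), and it satisfies |U(0)| = |V(0)| = ξ₀ > 0. -/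
open Set Complex Filter Topology

lemma aux_rpow_nh {x : ℝ} (hx : 0 < x) : x ^ (-(1/2) : ℝ) = (Real.sqrt x)⁻¹ := by
  rw [Real.rpow_neg hx.le, ← Real.sqrt_eq_rpow]

lemma aux_rpow_nth {x : ℝ} (hx : 0 < x) :
    x ^ (-(1/2) - 1 : ℝ) = (Real.sqrt x)⁻¹ * x⁻¹ := by
  rw [show (-(1/2) - 1 : ℝ) = -(1/2) + (-1) by ring, Real.rpow_add hx, aux_rpow_nh hx,
    Real.rpow_neg_one]

lemma aux_key1 (ξ₀ sp sq sa : ℝ) (hsp : sp ≠ 0) (hsq : sq ≠ 0) (hsa : sa ≠ 0)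
    (h2 : sp ^ 2 + sq ^ 2 = 2) :
    sp ^ 2 * (-(1 / 2) * ξ₀ / (sp ^ 3 * sa) - 2 * ξ₀ ^ 3 / (sp ^ 4 * sq ^ 3 * sa ^ 3))
      + (1 / 2) * (ξ₀ / (sp * sa))
      = -(((ξ₀ / (sp * sa)) ^ 2 + (ξ₀ / (sq * sa)) ^ 2) * (ξ₀ / (sq * sa))) := by
  field_simp
  linear_combination (2 * ξ₀ ^ 3) * h2

lemma aux_key2 (ξ₀ sp sq sa : ℝ) (hsp : sp ≠ 0) (hsq : sq ≠ 0) (hsa : sa ≠ 0)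
    (h2 : sp ^ 2 + sq ^ 2 = 2) :
    -sq ^ 2 * (1 / 2 * ξ₀ / (sq ^ 3 * sa) - 2 * ξ₀ ^ 3 / (sp ^ 3 * sq ^ 4 * sa ^ 3))
      + (1 / 2) * (ξ₀ / (sq * sa))
      = ((ξ₀ / (sp * sa)) ^ 2 + (ξ₀ / (sq * sa)) ^ 2) * (ξ₀ / (sp * sa)) := by
  field_simp
  linear_combination (-(2 * ξ₀ ^ 3)) * h2

set_option maxHeartbeats 2000000 in
/-- for `k = ℓ = 1` (`p = 1`), with `y₀ = -1/√(1 + 16ξ₀⁴)` (the unique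
root in `(-1,0)` of `1 + 4ξ₀² y (1-y²)^{-1/2} = 0`), the pair
`U(y) = (1+y)^{-1/2} ρ(y)`, `V(y) = -i (1-y)^{-1/2} ρ(y)` with
`ρ(y) = ξ₀ (1 + 4ξ₀² y (1-y²)^{-1/2})^{-1/2}` solves the self-similar system (S)
on `(y₀, 1)` and satisfies `|U(0)| = |V(0)| = ξ₀`. -/
theorem explicit_selfsimilar_solution (ξ₀ : ℝ) (hξ₀ : 0 < ξ₀) (y₀ : ℝ)
    (hy₀ : y₀ = -1 / Real.sqrt (1 + 16 * ξ₀ ^ 4))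
    (ρ : ℝ → ℝ)
    (hρ : ∀ y, ρ y = ξ₀ * (1 + 4 * ξ₀ ^ 2 * y * (1 - y ^ 2) ^ (-(1 / 2) : ℝ)) ^ (-(1 / 2) : ℝ))
    (U V : ℝ → ℂ)
    (hU : ∀ y, U y = (((1 + y) ^ (-(1 / 2) : ℝ) * ρ y : ℝ) : ℂ))
    (hV : ∀ y, V y = -Complex.I * (((1 - y) ^ (-(1 / 2) : ℝ) * ρ y : ℝ) : ℂ)) :
    (y₀ ∈ Ioo (-1 : ℝ) 0 ∧
      ∀ y ∈ Ioo (-1 : ℝ) 0,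
        (1 + 4 * ξ₀ ^ 2 * y * (1 - y ^ 2) ^ (-(1 / 2) : ℝ) = 0 ↔ y = y₀)) ∧
    SolvesS 1 1 U V (Ioo y₀ 1) ∧
    ‖U 0‖ = ξ₀ ∧ ‖V 0‖ = ξ₀ := by
  have hc16 : (1:ℝ) < 1 + 16 * ξ₀ ^ 4 := by nlinarith [pow_pos hξ₀ 4]
  set c := Real.sqrt (1 + 16 * ξ₀ ^ 4) with hc_def
  have hcpos : 0 < c := Real.sqrt_pos.mpr (by linarith)
  have hc1 : 1 < c := by
    rw [hc_def]
    exact (Real.lt_sqrt (by norm_num)).mpr (by nlinarith [pow_pos hξ₀ 4])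
  have hcsq : c ^ 2 = 1 + 16 * ξ₀ ^ 4 := Real.sq_sqrt (by linarith)
  have hy₀mem : y₀ ∈ Ioo (-1:ℝ) 0 := by
    constructor
    · rw [hy₀, neg_div, neg_lt_neg_iff, div_lt_one hcpos]
      exact hc1
    · rw [hy₀]
      exact div_neg_of_neg_of_pos (by norm_num) hcpos
  have hy₀neg : y₀ < 0 := hy₀mem.2
  have hy₀gt : -1 < y₀ := hy₀mem.1
  -- uniqueness of the root
  have huniq : ∀ y ∈ Ioo (-1:ℝ) 0,
      (1 + 4 * ξ₀ ^ 2 * y * (1 - y ^ 2) ^ (-(1 / 2) : ℝ) = 0 ↔ y = y₀) := by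
    intro y hy
    obtain ⟨hy1, hy2⟩ := hy
    have hw : (0:ℝ) < 1 - y ^ 2 := by nlinarith
    have hsw : 0 < Real.sqrt (1 - y ^ 2) := Real.sqrt_pos.mpr hw
    have hswsq : Real.sqrt (1 - y ^ 2) ^ 2 = 1 - y ^ 2 := Real.sq_sqrt hw.le
    rw [aux_rpow_nh hw]
    constructor
    · intro h
      have h2 : 4 * ξ₀ ^ 2 * y = -Real.sqrt (1 - y ^ 2) := by
        field_simp at h
        linarith
      have h3 : y ^ 2 * c ^ 2 = 1 := by nlinarith [hswsq, hcsq]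
      have hyc : y * c < 0 := mul_neg_of_neg_of_pos hy2 hcpos
      have hfac : (y * c + 1) * (y * c - 1) = 0 := by linear_combination h3
      have h4 : y * c = -1 := by
        rcases mul_eq_zero.mp hfac with h' | h'
        · linarith
        · linarith
      rw [hy₀]
      field_simp
      linarith
    · intro h
      subst h
      have h5 : 1 - y ^ 2 = (4 * ξ₀ ^ 2 / c) ^ 2 := by
        rw [hy₀]
        field_simp
        nlinarith [hcsq]
      have h6 : Real.sqrt (1 - y ^ 2) = 4 * ξ₀ ^ 2 / c := by
        rw [h5]
        exact Real.sqrt_sq (by positivity)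
      rw [h6, hy₀]
      field_simp
      ring
  -- positivity of A on (y₀, 1)
  have hApos : ∀ y ∈ Ioo y₀ 1, 0 < 1 + 4 * ξ₀ ^ 2 * y * (1 - y ^ 2) ^ (-(1 / 2) : ℝ) := by
    intro y hy
    obtain ⟨hy1, hy2⟩ := hy
    have hyneg1 : (-1:ℝ) < y := lt_trans hy₀gt hy1
    have hw : (0:ℝ) < 1 - y ^ 2 := by nlinarith
    have hsw : 0 < Real.sqrt (1 - y ^ 2) := Real.sqrt_pos.mpr hw
    have hswsq : Real.sqrt (1 - y ^ 2) ^ 2 = 1 - y ^ 2 := Real.sq_sqrt hw.le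
    rw [aux_rpow_nh hw]
    have hkey : -Real.sqrt (1 - y ^ 2) < 4 * ξ₀ ^ 2 * y := by
      rcases le_or_gt 0 y with h | h
      · nlinarith [hsw]
      · have h6 : -1 < y * c := by
          rw [hy₀] at hy1
          exact (div_lt_iff₀ hcpos).mp hy1
        have hyc : y * c < 0 := mul_neg_of_neg_of_pos h hcpos
        have hq : (y * c) ^ 2 < 1 := by nlinarith
        have hid : (y * c) ^ 2 = y ^ 2 + 16 * ξ₀ ^ 4 * y ^ 2 := by
          linear_combination y ^ 2 * hcsq
        have hP2 : 16 * ξ₀ ^ 4 * y ^ 2 < 1 - y ^ 2 := by linarith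
        have ht : 4 * ξ₀ ^ 2 * y < 0 := mul_neg_of_pos_of_neg (by positivity) h
        have hsub : 0 < Real.sqrt (1 - y ^ 2) - 4 * ξ₀ ^ 2 * y := by linarith
        nlinarith [hP2, hswsq, hsub]
    have h7 : (-Real.sqrt (1 - y ^ 2)) * (Real.sqrt (1 - y ^ 2))⁻¹
        < (4 * ξ₀ ^ 2 * y) * (Real.sqrt (1 - y ^ 2))⁻¹ :=
      mul_lt_mul_of_pos_right hkey (inv_pos.mpr hsw)
    rw [neg_mul, mul_inv_cancel₀ hsw.ne'] at h7
    linarith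
  refine ⟨⟨hy₀mem, huniq⟩, ?_, ?_, ?_⟩
  · -- SolvesS
    have hρfun : ρ = fun t => ξ₀ *
        (1 + 4 * ξ₀ ^ 2 * t * (1 - t ^ 2) ^ (-(1 / 2) : ℝ)) ^ (-(1 / 2) : ℝ) := funext hρ
    have hUfun : U = fun t => (((1 + t) ^ (-(1 / 2) : ℝ) * ρ t : ℝ) : ℂ) := funext hU
    have hVfun : V = fun t => -Complex.I * (((1 - t) ^ (-(1 / 2) : ℝ) * ρ t : ℝ) : ℂ) :=
      funext hV
    -- common facts at a point of the interval
    have basic : ∀ y ∈ Ioo y₀ 1, (0:ℝ) < 1 + y ∧ (0:ℝ) < 1 - y ∧ (0:ℝ) < 1 - y ^ 2 := by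
      intro y hy
      obtain ⟨hy1, hy2⟩ := hy
      have hyneg1 : (-1:ℝ) < y := lt_trans hy₀gt hy1
      exact ⟨by linarith, by linarith, by nlinarith⟩
    -- smoothness of ρ at points of the interval
    have hρCD : ∀ y ∈ Ioo y₀ 1, ContDiffAt ℝ 1 ρ y := by
      intro y hy
      obtain ⟨hP, hQ, hw⟩ := basic y hy
      have hA := hApos y hy
      rw [hρfun]
      have h1 : ContDiffAt ℝ 1 (fun t : ℝ => 1 - t ^ 2) y :=
        (contDiff_const.sub (contDiff_id.pow 2)).contDiffAt
      have h2 : ContDiffAt ℝ 1 (fun t : ℝ => (1 - t ^ 2) ^ (-(1 / 2) : ℝ)) y :=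
        h1.rpow_const_of_ne hw.ne'
      have h3 : ContDiffAt ℝ 1
          (fun t : ℝ => 1 + 4 * ξ₀ ^ 2 * t * (1 - t ^ 2) ^ (-(1 / 2) : ℝ)) y :=
        contDiffAt_const.add (((contDiff_const.mul contDiff_id).contDiffAt).mul h2)
      exact contDiffAt_const.mul (h3.rpow_const_of_ne hA.ne')
    have hUCD : ContDiffOn ℝ 1 U (Ioo y₀ 1) := by
      intro y hy
      apply ContDiffAt.contDiffWithinAt
      obtain ⟨hP, hQ, hw⟩ := basic y hy
      rw [hUfun]
      have hreal : ContDiffAt ℝ 1 (fun t : ℝ => (1 + t) ^ (-(1 / 2) : ℝ) * ρ t) y :=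
        (((contDiff_const.add contDiff_id).contDiffAt).rpow_const_of_ne hP.ne').mul
          (hρCD y hy)
      exact Complex.ofRealCLM.contDiff.contDiffAt.comp y hreal
    have hVCD : ContDiffOn ℝ 1 V (Ioo y₀ 1) := by
      intro y hy
      apply ContDiffAt.contDiffWithinAt
      obtain ⟨hP, hQ, hw⟩ := basic y hy
      rw [hVfun]
      have hreal : ContDiffAt ℝ 1 (fun t : ℝ => (1 - t) ^ (-(1 / 2) : ℝ) * ρ t) y :=
        (((contDiff_const.sub contDiff_id).contDiffAt).rpow_const_of_ne hQ.ne').mul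
          (hρCD y hy)
      exact contDiffAt_const.mul (Complex.ofRealCLM.contDiff.contDiffAt.comp y hreal)
    refine ⟨hUCD, hVCD, ?_⟩
    intro y hy
    obtain ⟨hP, hQ, hw⟩ := basic y hy
    have hA := hApos y hy
    -- abbreviations
    set sp := Real.sqrt (1 + y) with hsp_def
    set sq := Real.sqrt (1 - y) with hsq_def
    set sw := Real.sqrt (1 - y ^ 2) with hsw_def
    set sa := Real.sqrt (1 + 4 * ξ₀ ^ 2 * y * (1 - y ^ 2) ^ (-(1 / 2) : ℝ)) with hsa_def
    have hsp : 0 < sp := Real.sqrt_pos.mpr hP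
    have hsq : 0 < sq := Real.sqrt_pos.mpr hQ
    have hsw : 0 < sw := Real.sqrt_pos.mpr hw
    have hsa : 0 < sa := Real.sqrt_pos.mpr hA
    have hsp2 : sp ^ 2 = 1 + y := Real.sq_sqrt hP.le
    have hsq2 : sq ^ 2 = 1 - y := Real.sq_sqrt hQ.le
    have hsw2 : sw ^ 2 = 1 - y ^ 2 := Real.sq_sqrt hw.le
    have hsa2 : sa ^ 2 = 1 + 4 * ξ₀ ^ 2 * y * (1 - y ^ 2) ^ (-(1 / 2) : ℝ) :=
      Real.sq_sqrt hA.le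
    have hswpq : sw = sp * sq := by
      rw [hsw_def, hsp_def, hsq_def, show (1 - y ^ 2 : ℝ) = (1 + y) * (1 - y) by ring,
        Real.sqrt_mul hP.le]
    -- derivative of ρ
    have hinner : HasDerivAt (fun t : ℝ => 1 - t ^ 2) (-(2 * y)) y := by
      simpa using (hasDerivAt_pow 2 y).const_sub 1
    have hs' : HasDerivAt (fun t : ℝ => (1 - t ^ 2) ^ (-(1 / 2) : ℝ))
        (-(2 * y) * (-(1 / 2)) * (1 - y ^ 2) ^ (-(1 / 2) - 1 : ℝ)) y :=
      hinner.rpow_const (Or.inl hw.ne')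
    have hlin : HasDerivAt (fun t : ℝ => 4 * ξ₀ ^ 2 * t) (4 * ξ₀ ^ 2) y := by
      simpa using (hasDerivAt_id y).const_mul (4 * ξ₀ ^ 2)
    have hAd : HasDerivAt
        (fun t : ℝ => 1 + 4 * ξ₀ ^ 2 * t * (1 - t ^ 2) ^ (-(1 / 2) : ℝ))
        (4 * ξ₀ ^ 2 * (1 - y ^ 2) ^ (-(1 / 2) : ℝ) +
          4 * ξ₀ ^ 2 * y * (-(2 * y) * (-(1 / 2)) * (1 - y ^ 2) ^ (-(1 / 2) - 1 : ℝ))) y :=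
      (hlin.mul hs').const_add 1
    set a' := 4 * ξ₀ ^ 2 * (1 - y ^ 2) ^ (-(1 / 2) : ℝ) +
          4 * ξ₀ ^ 2 * y * (-(2 * y) * (-(1 / 2)) * (1 - y ^ 2) ^ (-(1 / 2) - 1 : ℝ)) with ha'_def
    set ρ' := ξ₀ * (a' * (-(1 / 2)) *
        (1 + 4 * ξ₀ ^ 2 * y * (1 - y ^ 2) ^ (-(1 / 2) : ℝ)) ^ (-(1 / 2) - 1 : ℝ)) with hρ'_def
    have hρd : HasDerivAt ρ ρ' y := by
      rw [hρfun, hρ'_def]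
      exact (hAd.rpow_const (Or.inl hA.ne')).const_mul ξ₀
    -- closed forms
    have ha'eq : a' = 4 * ξ₀ ^ 2 / sw ^ 3 := by
      rw [ha'_def, aux_rpow_nh hw, aux_rpow_nth hw, ← hsw_def, ← hsw2]
      field_simp
      linear_combination hsw2
    have hρ'eq : ρ' = -2 * ξ₀ ^ 3 / (sw ^ 3 * sa ^ 3) := by
      rw [hρ'_def, ha'eq, aux_rpow_nth hA, ← hsa_def, ← hsa2]
      field_simp
      ring
    have hρyeq : ρ y = ξ₀ / sa := by
      rw [hρ y, aux_rpow_nh hA, ← hsa_def]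
      ring
    -- derivative of U
    set u' := 1 * (-(1 / 2)) * (1 + y) ^ (-(1 / 2) - 1 : ℝ) * ρ y +
        (1 + y) ^ (-(1 / 2) : ℝ) * ρ' with hu'_def
    have hud : HasDerivAt (fun t : ℝ => (1 + t) ^ (-(1 / 2) : ℝ) * ρ t) u' y :=
      ((((hasDerivAt_id y).const_add 1)).rpow_const (Or.inl hP.ne')).mul hρd
    have hUd : HasDerivAt U (u' : ℂ) y := by
      rw [hUfun]
      exact hud.ofReal_comp
    -- derivative of V
    set v' := (-1) * (-(1 / 2)) * (1 - y) ^ (-(1 / 2) - 1 : ℝ) * ρ y +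
        (1 - y) ^ (-(1 / 2) : ℝ) * ρ' with hv'_def
    have hQd : HasDerivAt (fun t : ℝ => (1 - t) ^ (-(1 / 2) : ℝ))
        ((-1) * (-(1 / 2)) * (1 - y) ^ (-(1 / 2) - 1 : ℝ)) y := by
      have h0 : HasDerivAt (fun t : ℝ => 1 - t) (-1) y := by
        simpa using (hasDerivAt_id y).const_sub 1
      exact h0.rpow_const (Or.inl hQ.ne')
    have hvd : HasDerivAt (fun t : ℝ => (1 - t) ^ (-(1 / 2) : ℝ) * ρ t) v' y :=
      hQd.mul hρd
    have hVd : HasDerivAt V (-Complex.I * (v' : ℂ)) y := by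
      rw [hVfun]
      exact (hvd.ofReal_comp).const_mul (-Complex.I)
    -- values
    set uy := (1 + y) ^ (-(1 / 2) : ℝ) * ρ y with huy_def
    set vy := (1 - y) ^ (-(1 / 2) : ℝ) * ρ y with hvy_def
    have huyeq : uy = ξ₀ / (sp * sa) := by
      rw [huy_def, aux_rpow_nh hP, ← hsp_def, hρyeq]
      field_simp
    have hvyeq : vy = ξ₀ / (sq * sa) := by
      rw [hvy_def, aux_rpow_nh hQ, ← hsq_def, hρyeq]
      field_simp
    have hu'eq : u' = -(1 / 2) * ξ₀ / (sp ^ 3 * sa) - 2 * ξ₀ ^ 3 / (sp ^ 4 * sq ^ 3 * sa ^ 3) := by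
      rw [hu'_def, aux_rpow_nth hP, aux_rpow_nh hP, ← hsp_def, hρyeq, hρ'eq, hswpq, ← hsp2]
      field_simp
      ring
    have hv'eq : v' = 1 / 2 * ξ₀ / (sq ^ 3 * sa) - 2 * ξ₀ ^ 3 / (sp ^ 3 * sq ^ 4 * sa ^ 3) := by
      rw [hv'_def, aux_rpow_nth hQ, aux_rpow_nh hQ, ← hsq_def, hρyeq, hρ'eq, hswpq, ← hsq2]
      field_simp
      ring
    -- algebraic identities
    have h2 : sp ^ 2 + sq ^ 2 = 2 := by linarith
    have key1 : (y + 1) * u' + (1 / 2) * uy = -((uy ^ 2 + vy ^ 2) * vy) := by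
      rw [hu'eq, huyeq, hvyeq, show y + 1 = sp ^ 2 by linarith [hsp2]]
      exact aux_key1 ξ₀ sp sq sa hsp.ne' hsq.ne' hsa.ne' h2
    have key2 : (y - 1) * v' + (1 / 2) * vy = (uy ^ 2 + vy ^ 2) * uy := by
      rw [hv'eq, huyeq, hvyeq, show y - 1 = -sq ^ 2 by linarith [hsq2]]
      exact aux_key2 ξ₀ sp sq sa hsp.ne' hsq.ne' hsa.ne' h2
    -- complex bookkeeping
    have hUy : U y = (uy : ℂ) := hU y
    have hVy : V y = -Complex.I * (vy : ℂ) := hV y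
    have hdU : deriv U y = (u' : ℂ) := hUd.deriv
    have hdV : deriv V y = -Complex.I * (v' : ℂ) := hVd.deriv
    have hR : Rfun U V y = 0 := by
      simp only [Rfun, hUy, hVy, map_mul, map_neg, Complex.conj_I, Complex.conj_ofReal]
      ring
    have hF : Ffun 1 1 U V y = ((uy ^ 2 + vy ^ 2 : ℝ) : ℂ) := by
      simp [Ffun, hUy, hVy, map_mul, Complex.norm_real, _root_.sq_abs]
    have hG : Gfun 1 1 U V y = 0 := by
      simp [Gfun, hR]
    have keyC1 := congrArg (fun r : ℝ => (r : ℂ)) key1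
    have keyC2 := congrArg (fun r : ℝ => (r : ℂ)) key2
    push_cast at keyC1 keyC2
    constructor
    · rw [hdU, hUy, hVy, hF, hG]
      norm_num
      linear_combination Complex.I * keyC1
    · rw [hdV, hUy, hVy, hF, hG]
      norm_num
      linear_combination (-(Complex.I ^ 2)) * keyC2 -
        (((uy : ℂ) ^ 2 + (vy : ℂ) ^ 2) * (uy : ℂ)) * Complex.I_sq
  · -- |U 0| = ξ₀
    have hρ0 : ρ 0 = ξ₀ := by
      rw [hρ 0]
      norm_num
    rw [hU 0]
    rw [show ((1:ℝ) + 0) = 1 by norm_num, Real.one_rpow, one_mul, hρ0,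
      Complex.norm_real, Real.norm_eq_abs, abs_of_pos hξ₀]
  · -- |V 0| = ξ₀
    have hρ0 : ρ 0 = ξ₀ := by
      rw [hρ 0]
      norm_num
    rw [hV 0]
    rw [show ((1:ℝ) - 0) = 1 by norm_num, Real.one_rpow, one_mul, hρ0]
    simp [abs_of_pos hξ₀]
end
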